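/- Let U ≤ S_s and V ≤ S_r be transitive groups and let G ≤ U ≀ V ≤ S_{rs} be a subgroup whose natural projection to V is onto. Let Δ be the block of the point 1 in the imprimitive action of G, and assume that the image of the block stabilizer G_Δ acting on Δ is all of U. Assume furthermore that U is almost simple with nonabelian simple socle L, and that K := G ∩ U^r is nontrivial. Then there exists a partition O_1, …, O_k of {1,…,r} preserved by the action of G on the blocks such that K ∩ L^{O_j} ≅ L for j = 1,…,k, and K ∩ L^r = (K ∩ L^{O_1}) × ⋯ × (K ∩ L^{O_k}), this product being the socle of K. -/

import Mathlib

/-- The order-preserving identification of the block `Δ_{i+1} = {i, i+r, …, i+(s-1)r}`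
(0-indexed points `ZMod (r*s)`) with `ZMod s`: position `k` corresponds to `i + k*r`. -/
def blockEmb (r s : ℕ) (i : Fin r) (k : ZMod s) : ZMod (r * s) :=
  (((i : ℕ) + k.val * r : ℕ) : ZMod (r * s))

/-- The block kernel `K = G ∩ U^r`: elements of `G` preserving every block and inducing an
element of `U` on each block. -/
def blockKernel (r s : ℕ) (U : Subgroup (Equiv.Perm (ZMod s)))
    (G : Subgroup (Equiv.Perm (ZMod (r * s)))) : Subgroup (Equiv.Perm (ZMod (r * s))) where
  carrier := {g | g ∈ G ∧ ∀ i : Fin r, ∃ u ∈ U,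
    ∀ k, g (blockEmb r s i k) = blockEmb r s i (u k)}
  one_mem' := ⟨G.one_mem, fun i => ⟨1, U.one_mem, fun k => rfl⟩⟩
  mul_mem' := by
    rintro a b ⟨haG, ha⟩ ⟨hbG, hb⟩
    refine ⟨G.mul_mem haG hbG, fun i => ?_⟩
    obtain ⟨u, hu, hu'⟩ := ha i
    obtain ⟨w, hw, hw'⟩ := hb i
    refine ⟨u * w, U.mul_mem hu hw, fun k => ?_⟩
    have : (a * b) (blockEmb r s i k) = a (b (blockEmb r s i k)) := rfl
    rw [this, hw', hu']
    rfl
  inv_mem' := by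
    rintro a ⟨haG, ha⟩
    refine ⟨G.inv_mem haG, fun i => ?_⟩
    obtain ⟨u, hu, hu'⟩ := ha i
    refine ⟨u⁻¹, U.inv_mem hu, fun k => ?_⟩
    have h1 : a (blockEmb r s i (u⁻¹ k)) = blockEmb r s i k := by
      rw [hu']
      simp
    rw [← h1]
    simp

/-- The subgroup `L^O ≤ L^r` of block-diagonal permutations whose component on each block lies
in `L` and is trivial on the blocks outside `O`. -/
def diagSupport (r s : ℕ) (L : Subgroup (Equiv.Perm (ZMod s))) (O : Finset (Fin r)) :
    Subgroup (Equiv.Perm (ZMod (r * s))) where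
  carrier := {g | ∀ i : Fin r, ∃ u ∈ L, (i ∉ O → u = 1) ∧
    ∀ k, g (blockEmb r s i k) = blockEmb r s i (u k)}
  one_mem' := fun i => ⟨1, L.one_mem, fun _ => rfl, fun k => rfl⟩
  mul_mem' := by
    rintro a b ha hb
    intro i
    obtain ⟨u, hu, hu1, hu'⟩ := ha i
    obtain ⟨w, hw, hw1, hw'⟩ := hb i
    refine ⟨u * w, L.mul_mem hu hw, fun h => by rw [hu1 h, hw1 h, one_mul], fun k => ?_⟩
    have : (a * b) (blockEmb r s i k) = a (b (blockEmb r s i k)) := rfl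
    rw [this, hw', hu']
    rfl
  inv_mem' := by
    rintro a ha i
    obtain ⟨u, hu, hu1, hu'⟩ := ha i
    refine ⟨u⁻¹, L.inv_mem hu, fun h => by rw [hu1 h]; simp, fun k => ?_⟩
    have h1 : a (blockEmb r s i (u⁻¹ k)) = blockEmb r s i k := by
      rw [hu']
      simp
    rw [← h1]
    simp

/-- The socle of a group: the subgroup generated by all minimal normal subgroups. -/
def socle (G : Type*) [Group G] : Subgroup G :=
  ⨆ N ∈ {N : Subgroup G | N.Normal ∧ N ≠ ⊥ ∧
    ∀ M : Subgroup G, M.Normal → M ≤ N → M = ⊥ ∨ M = N}, N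

set_option linter.unusedSectionVars false
namespace Stmt6
section Basic
variable (r s : ℕ) [NeZero r] [NeZero s]

lemma emb_val (i : Fin r) (k : ZMod s) :
    (blockEmb r s i k).val = (i : ℕ) + k.val * r := by
  have hk : k.val < s := ZMod.val_lt k
  have hi : (i : ℕ) < r := i.isLt
  have h : (i : ℕ) + k.val * r < r * s := by nlinarith
  exact ZMod.val_cast_of_lt h

/-- index of the block containing a point -/
def blockIdx (x : ZMod (r * s)) : Fin r := ⟨x.val % r, Nat.mod_lt _ (NeZero.pos r)⟩

/-- position within the block -/
def blockPos (x : ZMod (r * s)) : ZMod s := ((x.val / r : ℕ) : ZMod s)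

lemma blockIdx_emb (i : Fin r) (k : ZMod s) : blockIdx r s (blockEmb r s i k) = i := by
  apply Fin.ext
  simp only [blockIdx, emb_val]
  rw [Nat.add_mul_mod_self_right, Nat.mod_eq_of_lt i.isLt]

lemma blockPos_emb (i : Fin r) (k : ZMod s) : blockPos r s (blockEmb r s i k) = k := by
  simp only [blockPos, emb_val]
  rw [Nat.add_mul_div_right _ _ (NeZero.pos r), Nat.div_eq_of_lt i.isLt, zero_add]
  exact ZMod.natCast_rightInverse k

lemma emb_inj {i : Fin r} {k k' : ZMod s} (h : blockEmb r s i k = blockEmb r s i k') :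
    k = k' := by
  have := congrArg (blockPos r s) h
  rwa [blockPos_emb, blockPos_emb] at this

lemma emb_inj' {i i' : Fin r} {k k' : ZMod s} (h : blockEmb r s i k = blockEmb r s i' k') :
    i = i' ∧ k = k' := by
  have h1 := congrArg (blockIdx r s) h
  have h2 := congrArg (blockPos r s) h
  rw [blockIdx_emb, blockIdx_emb] at h1
  rw [blockPos_emb, blockPos_emb] at h2
  exact ⟨h1, h2⟩

lemma emb_surj (x : ZMod (r * s)) : blockEmb r s (blockIdx r s x) (blockPos r s x) = x := by
  have hx : x.val < r * s := ZMod.val_lt x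
  have hdiv : x.val / r < s := Nat.div_lt_of_lt_mul hx
  have hval : ((x.val / r : ℕ) : ZMod s).val = x.val / r := ZMod.val_cast_of_lt hdiv
  show (((blockIdx r s x : ℕ) + _ * r : ℕ) : ZMod (r * s)) = x
  simp only [blockIdx, blockPos, hval]
  rw [Nat.mod_add_div']
  exact ZMod.natCast_rightInverse x

/-- `g` preserves block `i`, inducing a permutation of the block -/
def PB (g : Equiv.Perm (ZMod (r * s))) (i : Fin r) : Prop :=
  ∃ u : Equiv.Perm (ZMod s), ∀ k, g (blockEmb r s i k) = blockEmb r s i (u k)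

/-- the permutation induced by `g` on block `i` -/
noncomputable def piB (g : Equiv.Perm (ZMod (r * s))) (i : Fin r) : Equiv.Perm (ZMod s) :=
  letI := Classical.dec (PB r s g i)
  if h : PB r s g i then h.choose else 1

variable {r s}

lemma piB_eq {g : Equiv.Perm (ZMod (r * s))} {i : Fin r} {u : Equiv.Perm (ZMod s)}
    (h : ∀ k, g (blockEmb r s i k) = blockEmb r s i (u k)) : piB r s g i = u := by
  have hPB : PB r s g i := ⟨u, h⟩
  letI := Classical.dec (PB r s g i)
  rw [piB]
  rw [dif_pos hPB]
  ext k
  exact emb_inj r s ((hPB.choose_spec k).symm.trans (h k))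

lemma piB_spec {g : Equiv.Perm (ZMod (r * s))} {i : Fin r} (h : PB r s g i) :
    ∀ k, g (blockEmb r s i k) = blockEmb r s i (piB r s g i k) := by
  obtain ⟨u, hu⟩ := h
  rw [piB_eq hu]; exact hu

lemma piB_one (i : Fin r) : piB r s (1 : Equiv.Perm (ZMod (r * s))) i = 1 :=
  piB_eq (fun _ => rfl)

lemma PB.mul {g h : Equiv.Perm (ZMod (r * s))} {i : Fin r} (hg : PB r s g i)
    (hh : PB r s h i) : PB r s (g * h) i :=
  ⟨piB r s g i * piB r s h i, fun k => by
    have : (g * h) (blockEmb r s i k) = g (h (blockEmb r s i k)) := rfl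
    rw [this, piB_spec hh, piB_spec hg]; rfl⟩

lemma piB_mul {g h : Equiv.Perm (ZMod (r * s))} {i : Fin r} (hg : PB r s g i)
    (hh : PB r s h i) : piB r s (g * h) i = piB r s g i * piB r s h i :=
  piB_eq (fun k => by
    have : (g * h) (blockEmb r s i k) = g (h (blockEmb r s i k)) := rfl
    rw [this, piB_spec hh, piB_spec hg]; rfl)

lemma PB.inv {g : Equiv.Perm (ZMod (r * s))} {i : Fin r} (hg : PB r s g i) :
    PB r s g⁻¹ i :=
  ⟨(piB r s g i)⁻¹, fun k => by
    apply g.injective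
    rw [piB_spec hg]
    simp⟩

lemma piB_inv {g : Equiv.Perm (ZMod (r * s))} {i : Fin r} (hg : PB r s g i) :
    piB r s g⁻¹ i = (piB r s g i)⁻¹ :=
  piB_eq (fun k => by
    apply g.injective
    rw [piB_spec hg]
    simp)

lemma eq_of_piB {g h : Equiv.Perm (ZMod (r * s))} (hg : ∀ i, PB r s g i)
    (hh : ∀ i, PB r s h i) (he : ∀ i, piB r s g i = piB r s h i) : g = h := by
  ext x
  have hx := emb_surj r s x
  rw [← hx, piB_spec (hg _), piB_spec (hh _), he]

lemma eq_one_of_piB {g : Equiv.Perm (ZMod (r * s))} (hg : ∀ i, PB r s g i)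
    (he : ∀ i, piB r s g i = 1) : g = 1 :=
  eq_of_piB hg (fun _ => ⟨1, fun _ => rfl⟩) (fun i => by rw [he, piB_one])

lemma exists_piB_ne_one {g : Equiv.Perm (ZMod (r * s))} (hg : ∀ i, PB r s g i)
    (hne : g ≠ 1) : ∃ i, piB r s g i ≠ 1 := by
  by_contra h
  push_neg at h
  exact hne (eq_one_of_piB hg h)

lemma mem_blockKernel_iff {U : Subgroup (Equiv.Perm (ZMod s))}
    {G : Subgroup (Equiv.Perm (ZMod (r * s)))} {g : Equiv.Perm (ZMod (r * s))} :
    g ∈ blockKernel r s U G ↔ g ∈ G ∧ ∀ i, PB r s g i ∧ piB r s g i ∈ U := by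
  constructor
  · rintro ⟨hG, h⟩
    refine ⟨hG, fun i => ?_⟩
    obtain ⟨u, hu, hu'⟩ := h i
    exact ⟨⟨u, hu'⟩, by rw [piB_eq hu']; exact hu⟩
  · rintro ⟨hG, h⟩
    exact ⟨hG, fun i => ⟨piB r s g i, (h i).2, piB_spec (h i).1⟩⟩

lemma mem_diagSupport_iff {L : Subgroup (Equiv.Perm (ZMod s))} {O : Finset (Fin r)}
    {g : Equiv.Perm (ZMod (r * s))} :
    g ∈ diagSupport r s L O ↔
      ∀ i, PB r s g i ∧ piB r s g i ∈ L ∧ (i ∉ O → piB r s g i = 1) := by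
  constructor
  · intro h i
    obtain ⟨u, hu, hu1, hu'⟩ := h i
    exact ⟨⟨u, hu'⟩, by rw [piB_eq hu']; exact hu, fun hO => by rw [piB_eq hu']; exact hu1 hO⟩
  · intro h i
    exact ⟨piB r s g i, (h i).2.1, (h i).2.2, piB_spec (h i).1⟩

end Basic
end Stmt6
namespace Stmt6
variable (r s : ℕ) [NeZero r] [NeZero s]

/-- Bundled context for the theorem. -/
structure Ctx where
  U : Subgroup (Equiv.Perm (ZMod s))
  V : Subgroup (Equiv.Perm (Fin r))
  hU : ∀ x y : ZMod s, ∃ u ∈ U, u x = y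
  hV : ∀ x y : Fin r, ∃ v ∈ V, v x = y
  G : Subgroup (Equiv.Perm (ZMod (r * s)))
  hGwr : ∀ g ∈ G, ∃ v ∈ V, ∃ u : Fin r → Equiv.Perm (ZMod s), (∀ i, u i ∈ U) ∧
      ∀ i k, g (blockEmb r s i k) = blockEmb r s (v i) (u i k)
  hproj : ∀ v ∈ V, ∃ g ∈ G, ∃ u : Fin r → Equiv.Perm (ZMod s),
      ∀ i k, g (blockEmb r s i k) = blockEmb r s (v i) (u i k)
  hstab : ∀ h ∈ U, ∃ g ∈ G, ∀ k, g (blockEmb r s 0 k) = blockEmb r s 0 (h k)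
  L : Subgroup (Equiv.Perm (ZMod s))
  hLU : L ≤ U
  hLnormal : ∀ u ∈ U, ∀ x ∈ L, u * x * u⁻¹ ∈ L
  hLsimple : IsSimpleGroup ↥L
  hLnonab : ∃ a ∈ L, ∃ b ∈ L, a * b ≠ b * a
  hLcent : ∀ u ∈ U, (∀ x ∈ L, u * x = x * u) → u = 1
  hKne : blockKernel r s U G ≠ ⊥

variable {r s} (C : Ctx r s)

/-- K = G ∩ U^r -/
def Ctx.K : Subgroup (Equiv.Perm (ZMod (r * s))) := blockKernel r s C.U C.G

/-- M = K ∩ L^r -/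
def Ctx.M : Subgroup (Equiv.Perm (ZMod (r * s))) :=
  blockKernel r s C.U C.G ⊓ diagSupport r s C.L Finset.univ

lemma Ctx.K_PB {g} (hg : g ∈ C.K) (i : Fin r) : PB r s g i :=
  ((mem_blockKernel_iff.1 hg).2 i).1

lemma Ctx.K_piB_mem {g} (hg : g ∈ C.K) (i : Fin r) : piB r s g i ∈ C.U :=
  ((mem_blockKernel_iff.1 hg).2 i).2

lemma Ctx.K_G {g} (hg : g ∈ C.K) : g ∈ C.G := (mem_blockKernel_iff.1 hg).1

lemma Ctx.mem_M_iff {g} : g ∈ C.M ↔ g ∈ C.K ∧ ∀ i, piB r s g i ∈ C.L := by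
  constructor
  · rintro ⟨hK, hD⟩
    exact ⟨hK, fun i => (mem_diagSupport_iff.1 hD i).2.1⟩
  · rintro ⟨hK, hL⟩
    refine ⟨hK, mem_diagSupport_iff.2 fun i => ⟨C.K_PB hK i, hL i, fun h => absurd (Finset.mem_univ i) h⟩⟩

lemma Ctx.M_le_K : C.M ≤ C.K := inf_le_left

/-- uniqueness of the block action data -/
lemma vdet {g : Equiv.Perm (ZMod (r * s))} {v v' : Equiv.Perm (Fin r)}
    {u u' : Fin r → Equiv.Perm (ZMod s)}
    (h : ∀ i k, g (blockEmb r s i k) = blockEmb r s (v i) (u i k))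
    (h' : ∀ i k, g (blockEmb r s i k) = blockEmb r s (v' i) (u' i k)) :
    ∀ i, v i = v' i ∧ u i = u' i := by
  intro i
  have h1 : ∀ k, blockEmb r s (v i) (u i k) = blockEmb r s (v' i) (u' i k) :=
    fun k => (h i k).symm.trans (h' i k)
  have h2 := (emb_inj' r s (h1 0)).1
  refine ⟨h2, Equiv.ext fun k => ?_⟩
  have := (emb_inj' r s (h1 k)).2
  exact this

/-- data for the inverse -/
lemma inv_action {g : Equiv.Perm (ZMod (r * s))} {v : Equiv.Perm (Fin r)}
    {u : Fin r → Equiv.Perm (ZMod s)}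
    (h : ∀ i k, g (blockEmb r s i k) = blockEmb r s (v i) (u i k)) :
    ∀ i k, g⁻¹ (blockEmb r s (v i) k) = blockEmb r s i ((u i)⁻¹ k) := by
  intro i k
  apply g.injective
  rw [h i]
  simp

/-- conjugation formula -/
lemma conj_formula {g h : Equiv.Perm (ZMod (r * s))} {v : Equiv.Perm (Fin r)}
    {u : Fin r → Equiv.Perm (ZMod s)}
    (hgd : ∀ i k, g (blockEmb r s i k) = blockEmb r s (v i) (u i k))
    {i : Fin r} (hh : PB r s h i) :
    (∀ k, (g * h * g⁻¹) (blockEmb r s (v i) k)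
      = blockEmb r s (v i) ((u i * piB r s h i * (u i)⁻¹) k)) := by
  intro k
  have e1 : (g * h * g⁻¹) (blockEmb r s (v i) k) = g (h (g⁻¹ (blockEmb r s (v i) k))) := rfl
  rw [e1, inv_action hgd, piB_spec hh, hgd]
  rfl

lemma PB_conj {g h : Equiv.Perm (ZMod (r * s))} {v : Equiv.Perm (Fin r)}
    {u : Fin r → Equiv.Perm (ZMod s)}
    (hgd : ∀ i k, g (blockEmb r s i k) = blockEmb r s (v i) (u i k))
    {i : Fin r} (hh : PB r s h i) : PB r s (g * h * g⁻¹) (v i) :=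
  ⟨_, conj_formula hgd hh⟩

lemma piB_conj {g h : Equiv.Perm (ZMod (r * s))} {v : Equiv.Perm (Fin r)}
    {u : Fin r → Equiv.Perm (ZMod s)}
    (hgd : ∀ i k, g (blockEmb r s i k) = blockEmb r s (v i) (u i k))
    {i : Fin r} (hh : PB r s h i) :
    piB r s (g * h * g⁻¹) (v i) = u i * piB r s h i * (u i)⁻¹ :=
  piB_eq (conj_formula hgd hh)

/-- conjugation by an element of `G` preserves `K` -/
lemma Ctx.conj_K {g h : Equiv.Perm (ZMod (r * s))} {v : Equiv.Perm (Fin r)}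
    {u : Fin r → Equiv.Perm (ZMod s)} (hgG : g ∈ C.G) (huU : ∀ i, u i ∈ C.U)
    (hgd : ∀ i k, g (blockEmb r s i k) = blockEmb r s (v i) (u i k))
    (hh : h ∈ C.K) : g * h * g⁻¹ ∈ C.K := by
  show _ ∈ blockKernel r s C.U C.G
  rw [mem_blockKernel_iff]
  refine ⟨mul_mem (mul_mem hgG (C.K_G hh)) (inv_mem hgG), fun j => ?_⟩
  obtain ⟨i, rfl⟩ : ∃ i, v i = j := ⟨v.symm j, v.apply_symm_apply j⟩
  refine ⟨PB_conj hgd (C.K_PB hh i), ?_⟩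
  rw [piB_conj hgd (C.K_PB hh i)]
  exact mul_mem (mul_mem (huU i) (C.K_piB_mem hh i)) (inv_mem (huU i))

/-- conjugation by an element of `G` preserves `M` -/
lemma Ctx.conj_M {g h : Equiv.Perm (ZMod (r * s))} {v : Equiv.Perm (Fin r)}
    {u : Fin r → Equiv.Perm (ZMod s)} (hgG : g ∈ C.G) (huU : ∀ i, u i ∈ C.U)
    (hgd : ∀ i k, g (blockEmb r s i k) = blockEmb r s (v i) (u i k))
    (hh : h ∈ C.M) : g * h * g⁻¹ ∈ C.M := by
  obtain ⟨hK, hL⟩ := C.mem_M_iff.1 hh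
  refine C.mem_M_iff.2 ⟨C.conj_K hgG huU hgd hK, fun j => ?_⟩
  obtain ⟨i, rfl⟩ : ∃ i, v i = j := ⟨v.symm j, v.apply_symm_apply j⟩
  rw [piB_conj hgd (C.K_PB hK i)]
  exact C.hLnormal _ (huU i) _ (hL i)

/-- A `G`-element moving block `i` to block `j`, with proper wreath data. -/
lemma Ctx.exists_transporter (i j : Fin r) :
    ∃ g ∈ C.G, ∃ v : Equiv.Perm (Fin r), ∃ u : Fin r → Equiv.Perm (ZMod s),
      (∀ i', u i' ∈ C.U) ∧
      (∀ i' k, g (blockEmb r s i' k) = blockEmb r s (v i') (u i' k)) ∧ v i = j := by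
  obtain ⟨v0, hv0V, hv0⟩ := C.hV i j
  obtain ⟨g, hgG, u0, hgd0⟩ := C.hproj v0 hv0V
  obtain ⟨v, -, u, huU, hgd⟩ := C.hGwr g hgG
  have hv : ∀ i', v i' = v0 i' := fun i' => (vdet hgd hgd0 i').1
  exact ⟨g, hgG, v, u, huU, hgd, (hv i).trans hv0⟩

/-- Transfer of components between blocks by conjugation. -/
lemma Ctx.exists_conj (i j : Fin r) :
    ∃ c ∈ C.U, ∀ h, h ∈ C.K →
      ∃ h', h' ∈ C.K ∧ piB r s h' j = c * piB r s h i * c⁻¹ ∧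
        (h ∈ C.M → h' ∈ C.M) := by
  obtain ⟨g, hgG, v, u, huU, hgd, hvij⟩ := C.exists_transporter i j
  refine ⟨u i, huU i, fun h hh => ⟨g * h * g⁻¹, C.conj_K hgG huU hgd hh, ?_, fun hM => C.conj_M hgG huU hgd hM⟩⟩
  rw [← hvij]
  exact piB_conj hgd (C.K_PB hh i)

end Stmt6
namespace Stmt6
variable {r s : ℕ} [NeZero r] [NeZero s] (C : Ctx r s)

/-- components of `K` at block `i` -/
def Ctx.PiK (i : Fin r) : Subgroup (Equiv.Perm (ZMod s)) where
  carrier := {x | ∃ g ∈ C.K, piB r s g i = x}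
  one_mem' := ⟨1, one_mem _, piB_one i⟩
  mul_mem' := by
    rintro a b ⟨g, hg, rfl⟩ ⟨g', hg', rfl⟩
    exact ⟨g * g', mul_mem hg hg', piB_mul (C.K_PB hg i) (C.K_PB hg' i)⟩
  inv_mem' := by
    rintro a ⟨g, hg, rfl⟩
    exact ⟨g⁻¹, inv_mem hg, piB_inv (C.K_PB hg i)⟩

/-- components of `M` at block `i` -/
def Ctx.PiM (i : Fin r) : Subgroup (Equiv.Perm (ZMod s)) where
  carrier := {x | ∃ g ∈ C.M, piB r s g i = x}
  one_mem' := ⟨1, one_mem _, piB_one i⟩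
  mul_mem' := by
    rintro a b ⟨g, hg, rfl⟩ ⟨g', hg', rfl⟩
    exact ⟨g * g', mul_mem hg hg',
      piB_mul (C.K_PB (C.M_le_K hg) i) (C.K_PB (C.M_le_K hg') i)⟩
  inv_mem' := by
    rintro a ⟨g, hg, rfl⟩
    exact ⟨g⁻¹, inv_mem hg, piB_inv (C.K_PB (C.M_le_K hg) i)⟩

lemma Ctx.exists_noncomm {w : Equiv.Perm (ZMod s)} (hwU : w ∈ C.U) (hw : w ≠ 1) :
    ∃ l ∈ C.L, w * l ≠ l * w := by
  by_contra h
  push_neg at h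
  exact hw (C.hLcent w hwU h)

lemma Ctx.L_nontrivial : ∃ l ∈ C.L, l ≠ (1 : Equiv.Perm (ZMod s)) := by
  obtain ⟨a, ha, b, hb, hab⟩ := C.hLnonab
  refine ⟨a, ha, fun h => hab ?_⟩
  rw [h, one_mul, mul_one]

/-- data of an element of `K` as a wreath element with trivial top part -/
lemma Ctx.K_data {g} (hg : g ∈ C.K) :
    ∀ i k, g (blockEmb r s i k) = blockEmb r s ((1 : Equiv.Perm (Fin r)) i)
      ((fun i' => piB r s g i') i k) :=
  fun i k => piB_spec (C.K_PB hg i) k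

/-- `PiK 0` is normal in `U` -/
lemma Ctx.PiK0_normal : ∀ h ∈ C.U, ∀ x ∈ C.PiK 0, h * x * h⁻¹ ∈ C.PiK 0 := by
  intro h hhU x hx
  obtain ⟨g, hgK, rfl⟩ := hx
  obtain ⟨g0, hg0G, hg0⟩ := C.hstab h hhU
  obtain ⟨v, -, u, huU, hgd⟩ := C.hGwr g0 hg0G
  have h00 : v 0 = 0 ∧ u 0 = h := by
    have h1 : ∀ k, blockEmb r s (v 0) (u 0 k) = blockEmb r s 0 (h k) :=
      fun k => (hgd 0 k).symm.trans (hg0 k)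
    exact ⟨(emb_inj' r s (h1 0)).1, Equiv.ext fun k => (emb_inj' r s (h1 k)).2⟩
  refine ⟨g0 * g * g0⁻¹, C.conj_K hg0G huU hgd hgK, ?_⟩
  have := piB_conj hgd (C.K_PB hgK 0)
  rw [h00.1, h00.2] at this
  exact this

lemma conj_ne_one {c x : Equiv.Perm (ZMod s)} (h : x ≠ 1) : c * x * c⁻¹ ≠ 1 := by
  intro he
  apply h
  have h2 : x = c⁻¹ * (c * x * c⁻¹) * c := by group
  rw [h2, he]
  group

lemma Ctx.PiK0_nontrivial : ∃ x ∈ C.PiK 0, x ≠ (1 : Equiv.Perm (ZMod s)) := by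
  obtain ⟨⟨g, hgK⟩, hgne⟩ := Subgroup.ne_bot_iff_exists_ne_one.1 C.hKne
  have hgne' : g ≠ 1 := fun h => hgne (Subtype.ext h)
  obtain ⟨i, hi⟩ := exists_piB_ne_one (fun i' => C.K_PB hgK i') hgne'
  obtain ⟨c, hcU, hc⟩ := C.exists_conj i 0
  obtain ⟨g', hg'K, hg', -⟩ := hc g hgK
  exact ⟨piB r s g' 0, ⟨g', hg'K, rfl⟩, hg' ▸ conj_ne_one hi⟩

lemma Ctx.PiK_le_U (i : Fin r) : C.PiK i ≤ C.U := by
  rintro x ⟨g, hg, rfl⟩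
  exact C.K_piB_mem hg i

lemma Ctx.PiM_le_L (i : Fin r) : C.PiM i ≤ C.L := by
  rintro x ⟨g, hg, rfl⟩
  exact (C.mem_M_iff.1 hg).2 i

/-- A nontrivial subgroup of `U` normalized by `U` contains `L`. -/
lemma Ctx.L_le_of_normal (N : Subgroup (Equiv.Perm (ZMod s))) (hNU : N ≤ C.U)
    (hNnorm : ∀ h ∈ C.L, ∀ x ∈ N, h * x * h⁻¹ ∈ N)
    (hNL : ∀ x ∈ N, x ∈ C.L)
    (hNne : ∃ x ∈ N, x ≠ (1 : Equiv.Perm (ZMod s))) : ∀ l ∈ C.L, l ∈ N := by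
  -- N ≤ L here; N normalized by L; use simplicity
  have hnormal : (N.subgroupOf C.L).Normal := by
    constructor
    rintro ⟨n, hnL⟩ hn ⟨g, hgL⟩
    rw [Subgroup.mem_subgroupOf] at hn ⊢
    exact hNnorm g hgL n hn
  haveI := C.hLsimple
  rcases IsSimpleGroup.eq_bot_or_eq_top_of_normal (N.subgroupOf C.L) hnormal with hbot | htop
  · exfalso
    obtain ⟨x, hxN, hxne⟩ := hNne
    apply hxne
    have hxL : x ∈ C.L := hNL x hxN
    have : (⟨x, hxL⟩ : ↥C.L) ∈ N.subgroupOf C.L := by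
      rw [Subgroup.mem_subgroupOf]; exact hxN
    rw [hbot, Subgroup.mem_bot] at this
    exact congrArg Subtype.val this
  · intro l hl
    have : (⟨l, hl⟩ : ↥C.L) ∈ N.subgroupOf C.L := htop ▸ Subgroup.mem_top _
    rwa [Subgroup.mem_subgroupOf] at this

/-- L is contained in the 0-component of K. -/
lemma Ctx.L_le_PiK0 : ∀ l ∈ C.L, l ∈ C.PiK 0 := by
  -- N ⊓ L trick on N = PiK 0
  set N := C.PiK 0 with hN
  have hNU : N ≤ C.U := C.PiK_le_U 0
  have hNnorm : ∀ h ∈ C.U, ∀ x ∈ N, h * x * h⁻¹ ∈ N := C.PiK0_normal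
  -- consider N ⊓ L
  have hNL : ∀ h ∈ C.L, ∀ x ∈ N ⊓ C.L, h * x * h⁻¹ ∈ N ⊓ C.L := by
    rintro h hh x ⟨hxN, hxL⟩
    exact ⟨hNnorm h (C.hLU hh) x hxN, C.hLnormal h (C.hLU hh) x hxL⟩
  have hint : ∃ x ∈ N ⊓ C.L, x ≠ (1 : Equiv.Perm (ZMod s)) := by
    by_contra hc
    push_neg at hc
    -- then N centralizes L, so N = 1, contradiction
    obtain ⟨x, hxN, hxne⟩ := C.PiK0_nontrivial
    apply hxne
    apply C.hLcent x (hNU hxN)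
    intro l hl
    have hcomm : x * l * x⁻¹ * l⁻¹ ∈ N ⊓ C.L := by
      constructor
      · have h1 : l * x⁻¹ * l⁻¹ ∈ N := hNnorm l (C.hLU hl) x⁻¹ ((C.PiK 0).inv_mem hxN)
        have h2 : x * (l * x⁻¹ * l⁻¹) ∈ N := N.mul_mem hxN h1
        show x * l * x⁻¹ * l⁻¹ ∈ N
        convert h2 using 1; group
      · have h1 : x * l * x⁻¹ ∈ C.L := C.hLnormal x (hNU hxN) l hl
        exact C.L.mul_mem h1 (C.L.inv_mem hl)
    have h3 : x * l * x⁻¹ * l⁻¹ = 1 := hc _ hcomm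
    have h4 : x * l = (x * l * x⁻¹ * l⁻¹) * (l * x) := by group
    rw [h4, h3]; group
  intro l hl
  have := C.L_le_of_normal (N ⊓ C.L) (le_trans inf_le_right C.hLU) hNL
    (fun x hx => hx.2) hint l hl
  exact this.1

/-- L is contained in every component of K. -/
lemma Ctx.L_le_PiK : ∀ (i : Fin r), ∀ l ∈ C.L, ∃ g ∈ C.K, piB r s g i = l := by
  intro i l hl
  obtain ⟨c, hcU, hc⟩ := C.exists_conj 0 i
  have hl0 : c⁻¹ * l * c ∈ C.L := by
    have := C.hLnormal c⁻¹ (C.U.inv_mem hcU) l hl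
    rwa [inv_inv] at this
  obtain ⟨g, hgK, hg⟩ := C.L_le_PiK0 _ hl0
  obtain ⟨g', hg'K, hg', -⟩ := hc g hgK
  refine ⟨g', hg'K, ?_⟩
  rw [hg', hg]
  group

end Stmt6
namespace Stmt6
variable {r s : ℕ} [NeZero r] [NeZero s] (C : Ctx r s)

lemma Ctx.piB_comm {g κ : Equiv.Perm (ZMod (r * s))} (hg : g ∈ C.K) (hκ : κ ∈ C.K)
    (i : Fin r) :
    piB r s (g * κ * g⁻¹ * κ⁻¹) i
      = piB r s g i * piB r s κ i * (piB r s g i)⁻¹ * (piB r s κ i)⁻¹ := by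
  have h1 := C.K_PB hg i
  have h2 := C.K_PB hκ i
  rw [piB_mul ((h1.mul h2).mul h1.inv) h2.inv, piB_mul (h1.mul h2) h1.inv,
    piB_mul h1 h2, piB_inv h1, piB_inv h2]

lemma comm_eq_one {w l : Equiv.Perm (ZMod s)} (h : w * l * w⁻¹ * l⁻¹ = 1) :
    w * l = l * w := by
  have h4 : w * l = (w * l * w⁻¹ * l⁻¹) * (l * w) := by group
  rw [h4, h, one_mul]

lemma Ctx.M_nontrivial : ∃ m ∈ C.M, m ≠ (1 : Equiv.Perm (ZMod (r * s))) := by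
  classical
  obtain ⟨⟨g0, hg0K⟩, hg0ne⟩ := Subgroup.ne_bot_iff_exists_ne_one.1 C.hKne
  have hg0ne' : g0 ≠ 1 := fun h => hg0ne (Subtype.ext h)
  suffices H : ∀ n : ℕ, ∀ g, g ∈ C.K → g ≠ 1 →
      (Finset.univ.filter (fun j => piB r s g j ∉ C.L)).card ≤ n →
      ∃ m ∈ C.M, m ≠ (1 : Equiv.Perm (ZMod (r * s))) by
    exact H r g0 hg0K hg0ne'
      (le_trans (Finset.card_le_univ _) (by simp))
  intro n
  induction n with
  | zero =>
    intro g hgK hgne hcard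
    have hempty : (Finset.univ.filter (fun j => piB r s g j ∉ C.L)) = ∅ :=
      Finset.card_eq_zero.1 (Nat.le_zero.1 hcard)
    refine ⟨g, C.mem_M_iff.2 ⟨hgK, fun i => ?_⟩, hgne⟩
    by_contra hiL
    have hmem : i ∈ Finset.univ.filter (fun j => piB r s g j ∉ C.L) :=
      Finset.mem_filter.2 ⟨Finset.mem_univ i, hiL⟩
    rw [hempty] at hmem
    exact absurd hmem (Finset.notMem_empty i)
  | succ n IH =>
    intro g hgK hgne hcard
    rcases Finset.eq_empty_or_nonempty
        (Finset.univ.filter (fun j => piB r s g j ∉ C.L)) with hemp | ⟨j, hj⟩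
    · refine ⟨g, C.mem_M_iff.2 ⟨hgK, fun i => ?_⟩, hgne⟩
      by_contra hiL
      have hmem : i ∈ Finset.univ.filter (fun j => piB r s g j ∉ C.L) :=
        Finset.mem_filter.2 ⟨Finset.mem_univ i, hiL⟩
      rw [hemp] at hmem
      exact absurd hmem (Finset.notMem_empty i)
    · have hj' : piB r s g j ∉ C.L := (Finset.mem_filter.1 hj).2
      have hw1 : piB r s g j ≠ 1 := fun h => hj' (h ▸ C.L.one_mem)
      obtain ⟨l, hlL, hlc⟩ := C.exists_noncomm (C.K_piB_mem hgK j) hw1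
      obtain ⟨κ, hκK, hκ⟩ := C.L_le_PiK j l hlL
      set m := g * κ * g⁻¹ * κ⁻¹ with hm
      have hmK : m ∈ C.K := by
        exact mul_mem (mul_mem (mul_mem hgK hκK) (inv_mem hgK)) (inv_mem hκK)
      have hmj : piB r s m j = piB r s g j * l * (piB r s g j)⁻¹ * l⁻¹ := by
        rw [hm, C.piB_comm hgK hκK, hκ]
      have hmjne : piB r s m j ≠ 1 := by
        rw [hmj]
        intro h
        exact hlc (comm_eq_one h)
      have hmjL : piB r s m j ∈ C.L := by
        rw [hmj]
        exact C.L.mul_mem (C.hLnormal _ (C.K_piB_mem hgK j) l hlL) (C.L.inv_mem hlL)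
      have hmne : m ≠ 1 := fun h => hmjne (by rw [h, piB_one])
      apply IH m hmK hmne
      have hsub : (Finset.univ.filter (fun j' => piB r s m j' ∉ C.L)) ⊆
          (Finset.univ.filter (fun j' => piB r s g j' ∉ C.L)).erase j := by
        intro i' hi'
        have hi'm : piB r s m i' ∉ C.L := (Finset.mem_filter.1 hi').2
        have hi'j : i' ≠ j := fun h => hi'm (h ▸ hmjL)
        refine Finset.mem_erase.2 ⟨hi'j, Finset.mem_filter.2 ⟨Finset.mem_univ _, fun hgL => ?_⟩⟩
        apply hi'm
        have : piB r s m i' = piB r s g i' * piB r s κ i' * (piB r s g i')⁻¹ * (piB r s κ i')⁻¹ := by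
          rw [hm, C.piB_comm hgK hκK]
        rw [this]
        have h1 : piB r s κ i' * (piB r s g i')⁻¹ * (piB r s κ i')⁻¹ ∈ C.L :=
          C.hLnormal _ (C.K_piB_mem hκK i') _ (C.L.inv_mem hgL)
        have := C.L.mul_mem hgL h1
        convert this using 1
        group
      calc (Finset.univ.filter (fun j' => piB r s m j' ∉ C.L)).card
          ≤ ((Finset.univ.filter (fun j' => piB r s g j' ∉ C.L)).erase j).card :=
            Finset.card_le_card hsub
        _ ≤ n := by
            rw [Finset.card_erase_of_mem hj]
            omega

lemma Ctx.PiM_eq_L (i : Fin r) : ∀ l ∈ C.L, ∃ m ∈ C.M, piB r s m i = l := by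
  obtain ⟨m0, hm0M, hm0ne⟩ := C.M_nontrivial
  obtain ⟨i0, hi0⟩ := exists_piB_ne_one (fun i' => C.K_PB (C.M_le_K hm0M) i') hm0ne
  obtain ⟨c, hcU, hc⟩ := C.exists_conj i0 i
  obtain ⟨m1, hm1K, hm1, hm1M⟩ := hc m0 (C.M_le_K hm0M)
  have hm1M' := hm1M hm0M
  have hne : ∃ x ∈ C.PiM i, x ≠ (1 : Equiv.Perm (ZMod s)) :=
    ⟨piB r s m1 i, ⟨m1, hm1M', rfl⟩, hm1 ▸ conj_ne_one hi0⟩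
  have hnorm : ∀ h ∈ C.L, ∀ x ∈ C.PiM i, h * x * h⁻¹ ∈ C.PiM i := by
    rintro h hh x ⟨m, hmM, rfl⟩
    obtain ⟨κ, hκK, hκ⟩ := C.L_le_PiK i h hh
    refine ⟨κ * m * κ⁻¹,
      C.conj_M (C.K_G hκK) (fun i' => C.K_piB_mem hκK i') (C.K_data hκK) hmM, ?_⟩
    have hcf := piB_conj (C.K_data hκK) (C.K_PB (C.M_le_K hmM) i)
    simp only [Equiv.Perm.one_apply] at hcf
    rw [hcf, hκ]
  intro l hl
  exact C.L_le_of_normal (C.PiM i) (le_trans (C.PiM_le_L i) C.hLU) hnorm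
    (fun x hx => C.PiM_le_L i hx) hne l hl

end Stmt6
namespace Stmt6
variable {r s : ℕ} [NeZero r] [NeZero s] (C : Ctx r s)

/-- `i ~ j` iff the components of elements of `M` at `i` and `j` vanish together. -/
def Ctx.rel (i j : Fin r) : Prop :=
  ∀ m ∈ C.M, (piB r s m i = 1 ↔ piB r s m j = 1)

lemma Ctx.rel_refl (i : Fin r) : C.rel i i := fun _ _ => Iff.rfl

lemma Ctx.rel_symm {i j : Fin r} (h : C.rel i j) : C.rel j i := fun m hm => (h m hm).symm

lemma Ctx.rel_trans {i j k : Fin r} (h1 : C.rel i j) (h2 : C.rel j k) : C.rel i k :=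
  fun m hm => (h1 m hm).trans (h2 m hm)

lemma Ctx.piB_mul_inv {m m' : Equiv.Perm (ZMod (r * s))} (hm : m ∈ C.K) (hm' : m' ∈ C.K)
    (i : Fin r) : piB r s (m * m'⁻¹) i = piB r s m i * (piB r s m' i)⁻¹ := by
  rw [piB_mul (C.K_PB hm i) (C.K_PB hm' i).inv, piB_inv (C.K_PB hm' i)]

/-- conjugation of an element of `M` by an element of `K` with prescribed component. -/
lemma Ctx.M_conj_by_K {κ m : Equiv.Perm (ZMod (r * s))} (hκ : κ ∈ C.K) (hm : m ∈ C.M) :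
    κ * m * κ⁻¹ ∈ C.M ∧
      ∀ i, piB r s (κ * m * κ⁻¹) i = piB r s κ i * piB r s m i * (piB r s κ i)⁻¹ := by
  refine ⟨C.conj_M (C.K_G hκ) (fun i' => C.K_piB_mem hκ i') (C.K_data hκ) hm, fun i => ?_⟩
  have hcf := piB_conj (C.K_data hκ) (C.K_PB (C.M_le_K hm) i)
  simpa using hcf

/-- Independence: over a set of pairwise non-related indices, components of `M`
can be prescribed arbitrarily in `L`. -/
lemma Ctx.indep : ∀ S : Finset (Fin r), (∀ i ∈ S, ∀ j ∈ S, C.rel i j → i = j) →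
    ∀ t : Fin r → Equiv.Perm (ZMod s), (∀ i ∈ S, t i ∈ C.L) →
    ∃ m ∈ C.M, ∀ i ∈ S, piB r s m i = t i := by
  classical
  intro S
  induction S using Finset.induction_on with
  | empty => exact fun _ t _ => ⟨1, one_mem _, fun i hi => absurd hi (Finset.notMem_empty i)⟩
  | @insert a S ha IH =>
    intro hpair t ht
    obtain ⟨m', hm'M, hm'⟩ := IH
      (fun i hi j hj hr => hpair i (Finset.mem_insert_of_mem hi) j (Finset.mem_insert_of_mem hj) hr)
      t (fun i hi => ht i (Finset.mem_insert_of_mem hi))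
    -- the key claim: arbitrary L-values at a with trivial components on S
    have key : ∀ l ∈ C.L, ∃ q ∈ C.M, (∀ i ∈ S, piB r s q i = 1) ∧ piB r s q a = l := by
      -- the subgroup of achievable a-components
      set QA : Subgroup (Equiv.Perm (ZMod s)) :=
        { carrier := {x | ∃ q ∈ C.M, (∀ i ∈ S, piB r s q i = 1) ∧ piB r s q a = x}
          one_mem' := ⟨1, one_mem _, fun i _ => piB_one i, piB_one a⟩
          mul_mem' := by
            rintro x y ⟨q, hq, hqS, rfl⟩ ⟨q', hq', hq'S, rfl⟩
            refine ⟨q * q', mul_mem hq hq', fun i hi => ?_, ?_⟩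
            · rw [piB_mul (C.K_PB (C.M_le_K hq) i) (C.K_PB (C.M_le_K hq') i),
                hqS i hi, hq'S i hi, one_mul]
            · rw [piB_mul (C.K_PB (C.M_le_K hq) a) (C.K_PB (C.M_le_K hq') a)]
          inv_mem' := by
            rintro x ⟨q, hq, hqS, rfl⟩
            refine ⟨q⁻¹, inv_mem hq, fun i hi => ?_, piB_inv (C.K_PB (C.M_le_K hq) a)⟩
            rw [piB_inv (C.K_PB (C.M_le_K hq) i), hqS i hi, inv_one] } with hQAdef
      have hQAL : ∀ x ∈ QA, x ∈ C.L := by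
        rintro x ⟨q, hq, hqS, rfl⟩
        exact (C.mem_M_iff.1 hq).2 a
      have hQAnorm : ∀ h ∈ C.L, ∀ x ∈ QA, h * x * h⁻¹ ∈ QA := by
        rintro h hh x ⟨q, hq, hqS, rfl⟩
        obtain ⟨κ, hκK, hκ⟩ := C.L_le_PiK a h hh
        obtain ⟨hconjM, hconjpi⟩ := C.M_conj_by_K hκK hq
        refine ⟨κ * q * κ⁻¹, hconjM, fun i hi => ?_, ?_⟩
        · rw [hconjpi i, hqS i hi, mul_one, mul_inv_cancel]
        · rw [hconjpi a, hκ]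
      by_cases hQA : ∃ x ∈ QA, x ≠ (1 : Equiv.Perm (ZMod s))
      · intro l hl
        exact C.L_le_of_normal QA (fun x hx => C.hLU (hQAL x hx)) hQAnorm hQAL hQA l hl
      · -- trivial case: contradiction with non-relatedness
        exfalso
        push_neg at hQA
        have hQ : ∀ q ∈ C.M, (∀ i ∈ S, piB r s q i = 1) → piB r s q a = 1 :=
          fun q hq hqS => hQA _ ⟨q, hq, hqS, rfl⟩
        -- witnesses concentrated at one index b of S
        have wit : ∀ b, b ∈ S → ∀ l, l ∈ C.L → ∃ m, m ∈ C.M ∧ piB r s m b = l ∧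
            ∀ i ∈ S, i ≠ b → piB r s m i = 1 := by
          intro b hb l hl
          obtain ⟨m, hmM, hm⟩ := IH
            (fun i hi j hj hr => hpair i (Finset.mem_insert_of_mem hi) j
              (Finset.mem_insert_of_mem hj) hr)
            (fun i => if i = b then l else 1)
            (fun i _ => by by_cases h : i = b <;> simp [h, hl, C.L.one_mem])
          refine ⟨m, hmM, by simpa using hm b hb, fun i hi hib => by simpa [hib] using hm i hi⟩
        choose F hFM hFb hFS using wit
        -- the transfer homomorphisms
        set φ : Fin r → Equiv.Perm (ZMod s) → Equiv.Perm (ZMod s) := fun b l =>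
          if h : b ∈ S ∧ l ∈ C.L then piB r s (F b h.1 l h.2) a else 1 with hφdef
        have phi_def : ∀ (b) (hb : b ∈ S) (l) (hl : l ∈ C.L),
            φ b l = piB r s (F b hb l hl) a := by
          intro b hb l hl
          rw [hφdef]
          simp only [dif_pos (And.intro hb hl)]
        -- well-definedness
        have phi_eq : ∀ (b) (hb : b ∈ S) (l) (hl : l ∈ C.L) (m), m ∈ C.M →
            piB r s m b = l → (∀ i ∈ S, i ≠ b → piB r s m i = 1) →
            piB r s m a = φ b l := by
          intro b hb l hl m hmM hmb hmS
          have hq : m * (F b hb l hl)⁻¹ ∈ C.M := mul_mem hmM (inv_mem (hFM b hb l hl))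
          have hqS : ∀ i ∈ S, piB r s (m * (F b hb l hl)⁻¹) i = 1 := by
            intro i hi
            rw [C.piB_mul_inv (C.M_le_K hmM) (C.M_le_K (hFM b hb l hl)) i]
            by_cases hib : i = b
            · rw [hib, hmb, hFb b hb l hl, mul_inv_cancel]
            · rw [hmS i hi hib, hFS b hb l hl i hi hib, inv_one, mul_one]
          have := hQ _ hq hqS
          rw [C.piB_mul_inv (C.M_le_K hmM) (C.M_le_K (hFM b hb l hl)) a] at this
          rw [phi_def b hb l hl]
          exact eq_of_mul_inv_eq_one this
        have phi_mem : ∀ (b) (hb : b ∈ S) (l) (hl : l ∈ C.L), φ b l ∈ C.L := by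
          intro b hb l hl
          rw [phi_def b hb l hl]
          exact (C.mem_M_iff.1 (hFM b hb l hl)).2 a
        have phi_one : ∀ (b), b ∈ S → φ b 1 = 1 := by
          intro b hb
          have := phi_eq b hb 1 (C.L.one_mem) 1 (one_mem _) (piB_one b) (fun i _ _ => piB_one i)
          rw [← this, piB_one]
        have phi_mul : ∀ (b) (hb : b ∈ S) (l) (hl : l ∈ C.L) (l') (hl' : l' ∈ C.L),
            φ b (l * l') = φ b l * φ b l' := by
          intro b hb l hl l' hl'
          have hm : F b hb l hl * F b hb l' hl' ∈ C.M := mul_mem (hFM _ _ _ _) (hFM _ _ _ _)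
          have h1 : piB r s (F b hb l hl * F b hb l' hl') b = l * l' := by
            rw [piB_mul (C.K_PB (C.M_le_K (hFM b hb l hl)) b)
              (C.K_PB (C.M_le_K (hFM b hb l' hl')) b), hFb, hFb]
          have h2 : ∀ i ∈ S, i ≠ b → piB r s (F b hb l hl * F b hb l' hl') i = 1 := by
            intro i hi hib
            rw [piB_mul (C.K_PB (C.M_le_K (hFM b hb l hl)) i)
              (C.K_PB (C.M_le_K (hFM b hb l' hl')) i), hFS b hb l hl i hi hib,
              hFS b hb l' hl' i hi hib, one_mul]
          have := phi_eq b hb (l * l') (C.L.mul_mem hl hl') _ hm h1 h2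
          rw [← this, piB_mul (C.K_PB (C.M_le_K (hFM b hb l hl)) a)
            (C.K_PB (C.M_le_K (hFM b hb l' hl')) a), phi_def b hb l hl, phi_def b hb l' hl']
        have phi_inv : ∀ (b) (hb : b ∈ S) (l) (hl : l ∈ C.L), φ b l⁻¹ = (φ b l)⁻¹ := by
          intro b hb l hl
          have := phi_mul b hb l hl l⁻¹ (C.L.inv_mem hl)
          rw [mul_inv_cancel, phi_one b hb] at this
          exact eq_inv_of_mul_eq_one_right this.symm
        -- commutation between different indices
        have phi_comm : ∀ (b) (hb : b ∈ S) (b') (hb' : b' ∈ S), b ≠ b' →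
            ∀ (l) (hl : l ∈ C.L) (l') (hl' : l' ∈ C.L),
            φ b l * φ b' l' = φ b' l' * φ b l := by
          intro b hb b' hb' hbb' l hl l' hl'
          set m := F b hb l hl
          set m' := F b' hb' l' hl'
          have hmM := hFM b hb l hl
          have hm'M := hFM b' hb' l' hl'
          have hc : m * m' * m⁻¹ * m'⁻¹ ∈ C.M :=
            mul_mem (mul_mem (mul_mem hmM hm'M) (inv_mem hmM)) (inv_mem hm'M)
          have hcS : ∀ i ∈ S, piB r s (m * m' * m⁻¹ * m'⁻¹) i = 1 := by
            intro i hi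
            rw [C.piB_comm (C.M_le_K hmM) (C.M_le_K hm'M) i]
            by_cases hib : i = b
            · subst hib
              rw [hFS b' hb' l' hl' i hi hbb']
              group
            · rw [hFS b hb l hl i hi hib]
              group
          have := hQ _ hc hcS
          rw [C.piB_comm (C.M_le_K hmM) (C.M_le_K hm'M) a] at this
          have hcomm := comm_eq_one this
          rw [phi_def b hb l hl, phi_def b' hb' l' hl']
          exact hcomm
        -- the subgroup generated by all images
        set Hgen : Set (Equiv.Perm (ZMod s)) :=
          ⋃ b ∈ S, {x | ∃ l ∈ C.L, φ b l = x} with hHgendef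
        set H : Subgroup (Equiv.Perm (ZMod s)) := Subgroup.closure Hgen with hHdef
        have hgen_mem : ∀ (b), b ∈ S → ∀ (l), l ∈ C.L → φ b l ∈ H := by
          intro b hb l hl
          apply Subgroup.subset_closure
          exact Set.mem_biUnion hb ⟨l, hl, rfl⟩
        -- every a-component lies in H
        have aux : ∀ T : Finset (Fin r), T ⊆ S → ∀ m ∈ C.M,
            (∀ i ∈ S, i ∉ T → piB r s m i = 1) → piB r s m a ∈ H := by
          intro T
          induction T using Finset.induction_on with
          | empty =>
            intro _ m hmM hmS
            rw [hQ m hmM (fun i hi => hmS i hi (Finset.notMem_empty i))]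
            exact one_mem H
          | @insert b T hb IHT =>
            intro hsub m hmM hmS
            have hbS : b ∈ S := hsub (Finset.mem_insert_self b T)
            have hmbL : piB r s m b ∈ C.L := (C.mem_M_iff.1 hmM).2 b
            set m2 := m * (F b hbS (piB r s m b) hmbL)⁻¹ with hm2def
            have hm2M : m2 ∈ C.M := mul_mem hmM (inv_mem (hFM _ _ _ _))
            have hm2S : ∀ i ∈ S, i ∉ T → piB r s m2 i = 1 := by
              intro i hi hiT
              rw [hm2def, C.piB_mul_inv (C.M_le_K hmM) (C.M_le_K (hFM _ _ _ _)) i]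
              by_cases hib : i = b
              · subst hib
                rw [hFb, mul_inv_cancel]
              · rw [hFS b hbS _ _ i hi hib, inv_one, mul_one,
                  hmS i hi (by simp [hib, hiT])]
            have h2 := IHT (le_trans (Finset.subset_insert b T) hsub) m2 hm2M hm2S
            have hsplit : piB r s m a = piB r s m2 a * φ b (piB r s m b) := by
              rw [phi_def b hbS _ hmbL, hm2def,
                C.piB_mul_inv (C.M_le_K hmM) (C.M_le_K (hFM _ _ _ _)) a]
              group
            rw [hsplit]
            exact mul_mem h2 (hgen_mem b hbS _ hmbL)
        -- L is contained in H
        have hLH : ∀ l ∈ C.L, l ∈ H := by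
          intro l hl
          obtain ⟨m, hmM, hma⟩ := C.PiM_eq_L a l hl
          rw [← hma]
          exact aux S (le_refl S) m hmM (fun i hi hiS => absurd hi hiS)
        -- each image subgroup is trivial or full
        have main : ∀ (b), b ∈ S → (∀ l ∈ C.L, φ b l = 1) ∨
            (∀ l ∈ C.L, ∃ l' ∈ C.L, φ b l' = l) := by
          intro b hb
          by_cases hne : ∃ x, (∃ l ∈ C.L, φ b l = x) ∧ x ≠ (1 : Equiv.Perm (ZMod s))
          · right
            set NB : Subgroup (Equiv.Perm (ZMod s)) :=
              { carrier := {x | ∃ l ∈ C.L, φ b l = x}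
                one_mem' := ⟨1, C.L.one_mem, phi_one b hb⟩
                mul_mem' := by
                  rintro x y ⟨l, hl, rfl⟩ ⟨l', hl', rfl⟩
                  exact ⟨l * l', C.L.mul_mem hl hl', phi_mul b hb l hl l' hl'⟩
                inv_mem' := by
                  rintro x ⟨l, hl, rfl⟩
                  exact ⟨l⁻¹, C.L.inv_mem hl, phi_inv b hb l hl⟩ } with hNBdef
            have hNBL : ∀ x ∈ NB, x ∈ C.L := by
              rintro x ⟨l, hl, rfl⟩
              exact phi_mem b hb l hl
            have hnormalizer : H ≤ Subgroup.normalizer (NB : Set (Equiv.Perm (ZMod s))) := by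
              rw [hHdef]
              refine (Subgroup.closure_le _).2 ?_
              rintro x hx
              obtain ⟨b', hb', l', hl', rfl⟩ := Set.mem_iUnion₂.1 hx
              rw [SetLike.mem_coe, Subgroup.mem_normalizer_iff]
              intro y
              by_cases hbb' : b' = b
              · subst hbb'
                constructor
                · rintro ⟨l, hl, rfl⟩
                  refine ⟨l' * l * l'⁻¹, C.hLnormal l' (C.hLU hl') l hl, ?_⟩
                  rw [phi_mul b' hb' (l' * l) (C.L.mul_mem hl' hl) l'⁻¹ (C.L.inv_mem hl'),
                    phi_mul b' hb' l' hl' l hl, phi_inv b' hb' l' hl']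
                · rintro ⟨l, hl, hconj⟩
                  refine ⟨l'⁻¹ * l * l', ?_, ?_⟩
                  · have := C.hLnormal l'⁻¹ (C.U.inv_mem (C.hLU hl')) l hl
                    rwa [inv_inv] at this
                  · rw [phi_mul b' hb' (l'⁻¹ * l) (C.L.mul_mem (C.L.inv_mem hl') hl) l' hl',
                      phi_mul b' hb' l'⁻¹ (C.L.inv_mem hl') l hl, phi_inv b' hb' l' hl']
                    have : φ b' l = φ b' l' * y * (φ b' l')⁻¹ := hconj
                    rw [this]
                    group
              · have hcy : ∀ y' ∈ NB, φ b' l' * y' * (φ b' l')⁻¹ = y' := by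
                  rintro y' ⟨l, hl, rfl⟩
                  rw [phi_comm b' hb' b hb hbb' l' hl' l hl]
                  group
                constructor
                · intro hy
                  rw [hcy y hy]
                  exact hy
                · intro hy
                  have h2 : y = (φ b' l')⁻¹ * (φ b' l' * y * (φ b' l')⁻¹) * φ b' l' := by group
                  rw [h2, ← hcy _ hy]
                  have h3 : (φ b' l')⁻¹ * (φ b' l' * (φ b' l' * y * (φ b' l')⁻¹) * (φ b' l')⁻¹) *
                      φ b' l' = φ b' l' * y * (φ b' l')⁻¹ := by group
                  rw [h3]
                  exact hy
            have hnorm : ∀ h ∈ C.L, ∀ x ∈ NB, h * x * h⁻¹ ∈ NB := fun h hh x hx =>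
              (Subgroup.mem_normalizer_iff.1 (hnormalizer (hLH h hh)) x).1 hx
            exact fun l hl => C.L_le_of_normal NB (fun x hx => C.hLU (hNBL x hx))
              hnorm hNBL hne l hl
          · left
            push_neg at hne
            exact fun l hl => hne _ ⟨l, hl, rfl⟩
        -- at most one nontrivial index
        by_cases hexb : ∃ b₀, b₀ ∈ S ∧ ∃ l ∈ C.L, φ b₀ l ≠ (1 : Equiv.Perm (ZMod s))
        · obtain ⟨b₀, hb₀S, l₀, hl₀, hφne⟩ := hexb
          have hsurj := (main b₀ hb₀S).resolve_left (fun h => hφne (h l₀ hl₀))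
          have hother : ∀ b ∈ S, b ≠ b₀ → ∀ l ∈ C.L, φ b l = 1 := by
            intro b hb hbne l hl
            by_contra hne1
            have hsurj' := (main b hb).resolve_left (fun h => hne1 (h l hl))
            obtain ⟨x, hxL, y, hyL, hxy⟩ := C.hLnonab
            obtain ⟨lx, hlx, hx⟩ := hsurj x hxL
            obtain ⟨ly, hly, hy⟩ := hsurj' y hyL
            apply hxy
            rw [← hx, ← hy]
            exact phi_comm b₀ hb₀S b hb (Ne.symm hbne) lx hlx ly hly
          -- the identity piB m a = φ b₀ (piB m b₀)
          have aux2 : ∀ T : Finset (Fin r), T ⊆ S → ∀ m ∈ C.M,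
              (∀ i ∈ S, i ∉ T → piB r s m i = 1) →
              piB r s m a = φ b₀ (piB r s m b₀) := by
            intro T
            induction T using Finset.induction_on with
            | empty =>
              intro _ m hmM hmS
              have h1 : piB r s m b₀ = 1 := hmS b₀ hb₀S (Finset.notMem_empty b₀)
              rw [hQ m hmM (fun i hi => hmS i hi (Finset.notMem_empty i)), h1,
                phi_one b₀ hb₀S]
            | @insert b T hb IHT =>
              intro hsub m hmM hmS
              have hbS : b ∈ S := hsub (Finset.mem_insert_self b T)
              have hmbL : piB r s m b ∈ C.L := (C.mem_M_iff.1 hmM).2 b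
              set m2 := m * (F b hbS (piB r s m b) hmbL)⁻¹ with hm2def
              have hm2M : m2 ∈ C.M := mul_mem hmM (inv_mem (hFM _ _ _ _))
              have hm2c : ∀ i, piB r s m2 i
                  = piB r s m i * (piB r s (F b hbS (piB r s m b) hmbL) i)⁻¹ := fun i => by
                rw [hm2def, C.piB_mul_inv (C.M_le_K hmM) (C.M_le_K (hFM _ _ _ _)) i]
              have hm2S : ∀ i ∈ S, i ∉ T → piB r s m2 i = 1 := by
                intro i hi hiT
                rw [hm2c i]
                by_cases hib : i = b
                · subst hib
                  rw [hFb, mul_inv_cancel]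
                · rw [hFS b hbS _ _ i hi hib, inv_one, mul_one,
                    hmS i hi (by simp [hib, hiT])]
              have h2 := IHT (le_trans (Finset.subset_insert b T) hsub) m2 hm2M hm2S
              have hsplit : piB r s m a = piB r s m2 a * φ b (piB r s m b) := by
                rw [phi_def b hbS _ hmbL, hm2c a]
                group
              by_cases hbb0 : b = b₀
              · subst hbb0
                have hm2b : piB r s m2 b = 1 := by
                  rw [hm2c b, hFb, mul_inv_cancel]
                rw [hsplit, h2, hm2b, phi_one b hbS, one_mul]
              · have hm2b0 : piB r s m2 b₀ = piB r s m b₀ := by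
                  rw [hm2c b₀, hFS b hbS _ _ b₀ hb₀S (fun h => hbb0 h.symm), inv_one, mul_one]
                rw [hsplit, hother b hbS hbb0 _ hmbL, mul_one, h2, hm2b0]
          have ident : ∀ m ∈ C.M, piB r s m a = φ b₀ (piB r s m b₀) := fun m hm =>
            aux2 S (le_refl S) m hm (fun i hi hiS => absurd hi hiS)
          -- φ b₀ is injective on L
          have hker : ∀ l ∈ C.L, φ b₀ l = 1 → l = 1 := by
            by_contra hc
            push_neg at hc
            obtain ⟨l₁, hl₁, hφ1, hl₁ne⟩ := hc
            set KER : Subgroup (Equiv.Perm (ZMod s)) :=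
              { carrier := {x | x ∈ C.L ∧ φ b₀ x = 1}
                one_mem' := ⟨C.L.one_mem, phi_one b₀ hb₀S⟩
                mul_mem' := by
                  rintro x y ⟨hx, hx1⟩ ⟨hy, hy1⟩
                  exact ⟨C.L.mul_mem hx hy, by rw [phi_mul b₀ hb₀S x hx y hy, hx1, hy1, one_mul]⟩
                inv_mem' := by
                  rintro x ⟨hx, hx1⟩
                  exact ⟨C.L.inv_mem hx, by rw [phi_inv b₀ hb₀S x hx, hx1, inv_one]⟩ } with hKERdef
            have hKERnorm : ∀ h ∈ C.L, ∀ x ∈ KER, h * x * h⁻¹ ∈ KER := by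
              rintro h hh x ⟨hxL, hx1⟩
              refine ⟨C.hLnormal h (C.hLU hh) x hxL, ?_⟩
              rw [phi_mul b₀ hb₀S (h * x) (C.L.mul_mem hh hxL) h⁻¹ (C.L.inv_mem hh),
                phi_mul b₀ hb₀S h hh x hxL, hx1, mul_one, phi_inv b₀ hb₀S h hh,
                mul_inv_cancel]
            have hLker := C.L_le_of_normal KER (fun x hx => C.hLU hx.1) hKERnorm
              (fun x hx => hx.1) ⟨l₁, ⟨hl₁, hφ1⟩, hl₁ne⟩
            exact hφne (hLker l₀ hl₀).2
          have hrel : C.rel a b₀ := by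
            intro m hm
            constructor
            · intro h1
              have hid := ident m hm
              rw [h1] at hid
              exact hker _ ((C.mem_M_iff.1 hm).2 b₀) hid.symm
            · intro h1
              rw [ident m hm, h1, phi_one b₀ hb₀S]
          have heq : a = b₀ := hpair a (Finset.mem_insert_self a S) b₀
            (Finset.mem_insert_of_mem hb₀S) hrel
          rw [heq] at ha
          exact ha hb₀S
        · push_neg at hexb
          have hHbot : H ≤ ⊥ := by
            rw [hHdef]
            refine (Subgroup.closure_le _).2 ?_
            rintro x hx
            obtain ⟨b', hb', l', hl', rfl⟩ := Set.mem_iUnion₂.1 hx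
            have := hexb b' hb' l' hl'
            simp [this]
          obtain ⟨l, hl, hlne⟩ := C.L_nontrivial
          exact hlne (Subgroup.mem_bot.1 (hHbot (hLH l hl)))
    -- now conclude
    obtain ⟨q, hqM, hqS, hqa⟩ := key (t a * (piB r s m' a)⁻¹)
      (C.L.mul_mem (ht a (Finset.mem_insert_self a S))
        (C.L.inv_mem ((C.mem_M_iff.1 hm'M).2 a)))
    refine ⟨q * m', mul_mem hqM hm'M, fun i hi => ?_⟩
    rw [piB_mul (C.K_PB (C.M_le_K hqM) i) (C.K_PB (C.M_le_K hm'M) i)]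
    rcases Finset.mem_insert.1 hi with rfl | hiS
    · rw [hqa]
      exact inv_mul_cancel_right _ _
    · rw [hqS i hiS, one_mul]
      exact hm' i hiS
end Stmt6
namespace Stmt6
variable {r s : ℕ} [NeZero r] [NeZero s] (C : Ctx r s)

noncomputable instance Ctx.relDecidable (i : Fin r) : DecidablePred (C.rel i) :=
  Classical.decPred _

/-- the `rel`-class of `i` as a finset -/
noncomputable def Ctx.classFS (i : Fin r) : Finset (Fin r) :=
  Finset.univ.filter (C.rel i)

/-- the set of classes -/
noncomputable def Ctx.classes : Finset (Finset (Fin r)) :=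
  Finset.univ.image (fun i => C.classFS i)

/-- the number of classes -/
noncomputable def Ctx.nc : ℕ := C.classes.card

/-- the classes, enumerated -/
noncomputable def Ctx.O (j : Fin C.nc) : Finset (Fin r) :=
  (C.classes.equivFin.symm j : {x // x ∈ C.classes})

lemma Ctx.mem_classFS {i j : Fin r} : j ∈ C.classFS i ↔ C.rel i j := by
  rw [Ctx.classFS, Finset.mem_filter]
  simp

lemma Ctx.classFS_eq {i j : Fin r} (h : C.rel i j) : C.classFS i = C.classFS j := by
  ext x
  rw [C.mem_classFS, C.mem_classFS]
  exact ⟨fun h2 => C.rel_trans (C.rel_symm h) h2, fun h2 => C.rel_trans h h2⟩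

lemma Ctx.rel_of_classFS_eq {i j : Fin r} (h : C.classFS i = C.classFS j) : C.rel i j := by
  have : j ∈ C.classFS j := C.mem_classFS.2 (C.rel_refl j)
  rw [← h] at this
  exact C.mem_classFS.1 this

lemma Ctx.O_mem (j : Fin C.nc) : C.O j ∈ C.classes := (C.classes.equivFin.symm j).2

lemma Ctx.O_injective {j j' : Fin C.nc} (h : C.O j = C.O j') : j = j' :=
  C.classes.equivFin.symm.injective (Subtype.ext h)

/-- a representative of each class -/
noncomputable def Ctx.rep (j : Fin C.nc) : Fin r :=
  Classical.choose (Finset.mem_image.1 (C.O_mem j))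

lemma Ctx.classFS_rep (j : Fin C.nc) : C.classFS (C.rep j) = C.O j :=
  (Classical.choose_spec (Finset.mem_image.1 (C.O_mem j))).2

lemma Ctx.mem_O_iff {i : Fin r} {j : Fin C.nc} : i ∈ C.O j ↔ C.rel (C.rep j) i := by
  rw [← C.classFS_rep j, C.mem_classFS]

lemma Ctx.rep_mem (j : Fin C.nc) : C.rep j ∈ C.O j := C.mem_O_iff.2 (C.rel_refl _)

/-- the class of a given index -/
noncomputable def Ctx.classOf (i : Fin r) : Fin C.nc :=
  C.classes.equivFin ⟨C.classFS i, Finset.mem_image.2 ⟨i, Finset.mem_univ i, rfl⟩⟩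

lemma Ctx.O_classOf (i : Fin r) : C.O (C.classOf i) = C.classFS i := by
  rw [Ctx.O, Ctx.classOf, Equiv.symm_apply_apply]

lemma Ctx.mem_O_classOf (i : Fin r) : i ∈ C.O (C.classOf i) := by
  rw [C.O_classOf]
  exact C.mem_classFS.2 (C.rel_refl i)

lemma Ctx.classOf_eq_of_mem {i : Fin r} {j : Fin C.nc} (h : i ∈ C.O j) : j = C.classOf i := by
  apply C.O_injective
  rw [C.O_classOf, ← C.classFS_rep j]
  exact C.classFS_eq (C.mem_O_iff.1 h)

lemma Ctx.rep_injective {j j' : Fin C.nc} (h : C.rep j = C.rep j') : j = j' := by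
  apply C.O_injective
  rw [← C.classFS_rep j, ← C.classFS_rep j', h]

lemma Ctx.rel_rep {j j' : Fin C.nc} (h : C.rel (C.rep j) (C.rep j')) : j = j' := by
  apply C.O_injective
  rw [← C.classFS_rep j, ← C.classFS_rep j']
  exact C.classFS_eq h

/-- the factor subgroups -/
noncomputable def Ctx.MO (j : Fin C.nc) : Subgroup (Equiv.Perm (ZMod (r * s))) :=
  blockKernel r s C.U C.G ⊓ diagSupport r s C.L (C.O j)

lemma Ctx.mem_MO_iff {g : Equiv.Perm (ZMod (r * s))} {j : Fin C.nc} :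
    g ∈ C.MO j ↔ g ∈ C.K ∧ (∀ i, piB r s g i ∈ C.L) ∧
      (∀ i, i ∉ C.O j → piB r s g i = 1) := by
  constructor
  · rintro ⟨hK, hD⟩
    exact ⟨hK, fun i => (mem_diagSupport_iff.1 hD i).2.1, fun i hi => (mem_diagSupport_iff.1 hD i).2.2 hi⟩
  · rintro ⟨hK, hL, hsupp⟩
    exact ⟨hK, mem_diagSupport_iff.2 fun i => ⟨C.K_PB hK i, hL i, hsupp i⟩⟩

lemma Ctx.MO_le_M (j : Fin C.nc) : C.MO j ≤ C.M := by
  intro g hg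
  obtain ⟨hK, hL, _⟩ := C.mem_MO_iff.1 hg
  exact C.mem_M_iff.2 ⟨hK, hL⟩

lemma Ctx.MO_eq_one {g : Equiv.Perm (ZMod (r * s))} {j : Fin C.nc} (hg : g ∈ C.MO j)
    (h1 : piB r s g (C.rep j) = 1) : g = 1 := by
  obtain ⟨hK, hL, hsupp⟩ := C.mem_MO_iff.1 hg
  refine eq_one_of_piB (fun i => C.K_PB hK i) (fun i => ?_)
  by_cases hi : i ∈ C.O j
  · exact ((C.mem_O_iff.1 hi) g (C.MO_le_M j hg)).1 h1
  · exact hsupp i hi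

lemma Ctx.MO_surj (j : Fin C.nc) : ∀ l ∈ C.L, ∃ g ∈ C.MO j, piB r s g (C.rep j) = l := by
  classical
  intro l hl
  set S : Finset (Fin r) := Finset.univ.image C.rep with hSdef
  have hpair : ∀ i ∈ S, ∀ i' ∈ S, C.rel i i' → i = i' := by
    intro i hi i' hi' hrel
    obtain ⟨j1, -, rfl⟩ := Finset.mem_image.1 hi
    obtain ⟨j2, -, rfl⟩ := Finset.mem_image.1 hi'
    rw [C.rel_rep hrel]
  obtain ⟨m, hmM, hm⟩ := C.indep S hpair (fun i => if i = C.rep j then l else 1)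
    (fun i _ => by by_cases h : i = C.rep j <;> simp [h, hl, C.L.one_mem])
  have hrepj : piB r s m (C.rep j) = l := by
    have := hm (C.rep j) (Finset.mem_image.2 ⟨j, Finset.mem_univ j, rfl⟩)
    simpa using this
  refine ⟨m, C.mem_MO_iff.2 ⟨C.M_le_K hmM, (C.mem_M_iff.1 hmM).2, fun i hi => ?_⟩, hrepj⟩
  -- i outside O j: its rep is rep of another class
  set j2 := C.classOf i with hj2
  have hj2ne : j2 ≠ j := fun h => hi (h ▸ C.mem_O_classOf i)
  have hrep2 : piB r s m (C.rep j2) = 1 := by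
    have := hm (C.rep j2) (Finset.mem_image.2 ⟨j2, Finset.mem_univ j2, rfl⟩)
    have hne : C.rep j2 ≠ C.rep j := fun h => hj2ne (C.rep_injective h)
    simpa [hne] using this
  have hreli : C.rel (C.rep j2) i := C.mem_O_iff.1 (C.mem_O_classOf i)
  exact (hreli m hmM).1 hrep2

/-- the component homomorphism `MO j →* L` -/
noncomputable def Ctx.MOhom (j : Fin C.nc) : ↥(C.MO j) →* ↥(C.L) where
  toFun := fun x => ⟨piB r s (x : Equiv.Perm (ZMod (r * s))) (C.rep j),
    (C.mem_MO_iff.1 x.2).2.1 (C.rep j)⟩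
  map_one' := by
    refine Subtype.ext ?_
    simp only [OneMemClass.coe_one]
    exact piB_one (C.rep j)
  map_mul' := fun x y => by
    refine Subtype.ext ?_
    simp only [MulMemClass.coe_mul]
    exact piB_mul (C.K_PB (C.mem_MO_iff.1 x.2).1 (C.rep j))
      (C.K_PB (C.mem_MO_iff.1 y.2).1 (C.rep j))

/-- the isomorphism `MO j ≃ L` -/
noncomputable def Ctx.MOiso (j : Fin C.nc) : ↥(C.MO j) ≃* ↥(C.L) := by
  refine MulEquiv.ofBijective (C.MOhom j) ⟨?_, ?_⟩
  · intro x y hxy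
    have h1 : piB r s (x : Equiv.Perm (ZMod (r * s))) (C.rep j)
        = piB r s (y : Equiv.Perm (ZMod (r * s))) (C.rep j) := congrArg Subtype.val hxy
    have hK : ((x : Equiv.Perm (ZMod (r * s))) * (y : Equiv.Perm (ZMod (r * s)))⁻¹) ∈ C.MO j :=
      mul_mem x.2 (inv_mem y.2)
    have h2 : piB r s ((x : Equiv.Perm (ZMod (r * s))) * (y : Equiv.Perm (ZMod (r * s)))⁻¹)
        (C.rep j) = 1 := by
      rw [C.piB_mul_inv (C.mem_MO_iff.1 x.2).1 (C.mem_MO_iff.1 y.2).1, h1, mul_inv_cancel]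
    have := C.MO_eq_one hK h2
    exact Subtype.ext (eq_of_mul_inv_eq_one this)
  · rintro ⟨l, hl⟩
    obtain ⟨g, hg, hgl⟩ := C.MO_surj j l hl
    exact ⟨⟨g, hg⟩, Subtype.ext hgl⟩

end Stmt6
namespace Stmt6
variable {r s : ℕ} [NeZero r] [NeZero s] (C : Ctx r s)

lemma conj_eq_one_iff {c y : Equiv.Perm (ZMod s)} : c * y * c⁻¹ = 1 ↔ y = 1 := by
  constructor
  · intro h
    have : y = c⁻¹ * (c * y * c⁻¹) * c := by group
    rw [this, h]
    group
  · intro h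
    rw [h]
    group

lemma perm_apply_inv_self {α : Type*} (v : Equiv.Perm α) (x : α) : v (v⁻¹ x) = x :=
  Equiv.apply_symm_apply v x

lemma perm_inv_apply_self {α : Type*} (v : Equiv.Perm α) (x : α) : v⁻¹ (v x) = x :=
  Equiv.symm_apply_apply v x

lemma Ctx.rel_transport {g : Equiv.Perm (ZMod (r * s))} {v : Equiv.Perm (Fin r)}
    {u : Fin r → Equiv.Perm (ZMod s)} (hgG : g ∈ C.G) (huU : ∀ i, u i ∈ C.U)
    (heq : ∀ i k, g (blockEmb r s i k) = blockEmb r s (v i) (u i k)) (i i' : Fin r) :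
    C.rel i i' ↔ C.rel (v i) (v i') := by
  have heq' : ∀ i0 k, g⁻¹ (blockEmb r s i0 k)
      = blockEmb r s (v⁻¹ i0) ((u (v⁻¹ i0))⁻¹ k) := by
    intro i0 k
    have := inv_action heq (v⁻¹ i0) k
    rwa [perm_apply_inv_self] at this
  have hu'U : ∀ i0, (u (v⁻¹ i0))⁻¹ ∈ C.U := fun i0 => C.U.inv_mem (huU _)
  have hpi0 : ∀ m, m ∈ C.M → ∀ i1, piB r s (g⁻¹ * m * (g⁻¹)⁻¹) i1
      = (u i1)⁻¹ * piB r s m (v i1) * ((u i1)⁻¹)⁻¹ := by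
    intro m hm i1
    have := piB_conj heq' (C.K_PB (C.M_le_K hm) (v i1))
    rwa [perm_inv_apply_self] at this
  have hpi1 : ∀ m, m ∈ C.M → ∀ i1, piB r s (g * m * g⁻¹) (v i1)
      = u i1 * piB r s m i1 * (u i1)⁻¹ := fun m hm i1 =>
    piB_conj heq (C.K_PB (C.M_le_K hm) i1)
  constructor
  · intro hrel m hm
    have hm0 : g⁻¹ * m * (g⁻¹)⁻¹ ∈ C.M := C.conj_M (inv_mem hgG) hu'U heq' hm
    have e1 : piB r s m (v i) = 1 ↔ piB r s (g⁻¹ * m * (g⁻¹)⁻¹) i = 1 := by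
      rw [hpi0 m hm i]
      exact conj_eq_one_iff.symm
    have e2 : piB r s m (v i') = 1 ↔ piB r s (g⁻¹ * m * (g⁻¹)⁻¹) i' = 1 := by
      rw [hpi0 m hm i']
      exact conj_eq_one_iff.symm
    rw [e1, e2]
    exact hrel _ hm0
  · intro hrel m hm
    have hm1 : g * m * g⁻¹ ∈ C.M := C.conj_M hgG huU heq hm
    have e1 : piB r s m i = 1 ↔ piB r s (g * m * g⁻¹) (v i) = 1 := by
      rw [hpi1 m hm i]
      exact conj_eq_one_iff.symm
    have e2 : piB r s m i' = 1 ↔ piB r s (g * m * g⁻¹) (v i') = 1 := by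
      rw [hpi1 m hm i']
      exact conj_eq_one_iff.symm
    rw [e1, e2]
    exact hrel _ hm1

lemma Ctx.image_O {g : Equiv.Perm (ZMod (r * s))} {v : Equiv.Perm (Fin r)}
    {u : Fin r → Equiv.Perm (ZMod s)} (hgG : g ∈ C.G) (huU : ∀ i, u i ∈ C.U)
    (heq : ∀ i k, g (blockEmb r s i k) = blockEmb r s (v i) (u i k)) (j : Fin C.nc) :
    ∃ j', (C.O j).image v = C.O j' := by
  classical
  refine ⟨C.classOf (v (C.rep j)), ?_⟩
  rw [C.O_classOf]
  ext y
  rw [Finset.mem_image, C.mem_classFS]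
  constructor
  · rintro ⟨i, hi, rfl⟩
    exact (C.rel_transport hgG huU heq (C.rep j) i).1 (C.mem_O_iff.1 hi)
  · intro hrel
    refine ⟨v⁻¹ y, ?_, perm_apply_inv_self v y⟩
    rw [C.mem_O_iff]
    refine (C.rel_transport hgG huU heq (C.rep j) (v⁻¹ y)).2 ?_
    rwa [perm_apply_inv_self]

lemma prod_ofFn_single {G : Type*} [Monoid G] : ∀ {k : ℕ} (f : Fin k → G) (j₀ : Fin k),
    (∀ j, j ≠ j₀ → f j = 1) → (List.ofFn f).prod = f j₀ := by
  intro k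
  induction k with
  | zero => exact fun f j₀ => absurd (Fin.pos j₀) (by omega)
  | succ n IH =>
    intro f j₀ h
    rw [List.ofFn_succ, List.prod_cons]
    rcases Fin.eq_zero_or_eq_succ j₀ with rfl | ⟨j₁, rfl⟩
    · have htl : ∀ x ∈ List.ofFn (fun i : Fin n => f i.succ), x = 1 := by
        intro x hx
        obtain ⟨i, hi⟩ := List.mem_ofFn.1 hx
        rw [← hi]
        exact h i.succ (Fin.succ_ne_zero i)
      rw [List.prod_eq_one htl, mul_one]
    · rw [h 0 (Fin.succ_ne_zero j₁).symm, one_mul]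
      exact IH (fun i => f i.succ) j₁ (fun i hi => h i.succ
        (fun hc => hi (Fin.succ_injective _ hc)))

lemma Ctx.piB_list_prod (lst : List (Equiv.Perm (ZMod (r * s)))) (h : ∀ x ∈ lst, x ∈ C.K)
    (i : Fin r) : piB r s lst.prod i = (lst.map (fun x => piB r s x i)).prod := by
  induction lst with
  | nil =>
    simp only [List.prod_nil, List.map_nil]
    exact piB_one i
  | cons hd tl IH =>
    have htl : tl.prod ∈ C.K :=
      Subgroup.list_prod_mem _ (fun x hx => h x (List.mem_cons_of_mem hd hx))
    simp only [List.prod_cons, List.map_cons]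
    rw [piB_mul (C.K_PB (h hd (List.mem_cons_self)) i) (C.K_PB htl i),
      IH (fun x hx => h x (List.mem_cons_of_mem hd hx))]

end Stmt6
namespace Stmt6
variable {r s : ℕ} [NeZero r] [NeZero s] (C : Ctx r s)

lemma Ctx.classOf_rep (j : Fin C.nc) : C.classOf (C.rep j) = j :=
  (C.classOf_eq_of_mem (C.rep_mem j)).symm

lemma Ctx.prod_x_mem_M (x : ∀ j : Fin C.nc, ↥(C.MO j)) :
    (List.ofFn fun j => ((x j : Equiv.Perm (ZMod (r * s))))).prod ∈ C.M := by
  apply Subgroup.list_prod_mem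
  intro g hgl
  obtain ⟨j, hj⟩ := List.mem_ofFn.1 hgl
  rw [← hj]
  exact C.MO_le_M j (x j).2

lemma Ctx.piB_prod_x (x : ∀ j : Fin C.nc, ↥(C.MO j)) (i : Fin r) :
    piB r s (List.ofFn fun j => ((x j : Equiv.Perm (ZMod (r * s))))).prod i
      = piB r s (x (C.classOf i) : Equiv.Perm (ZMod (r * s))) i := by
  rw [C.piB_list_prod _ (fun g hgl => by
    obtain ⟨j, hj⟩ := List.mem_ofFn.1 hgl
    rw [← hj]
    exact (C.mem_MO_iff.1 (x j).2).1), List.map_ofFn]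
  refine prod_ofFn_single _ (C.classOf i) (fun j hj => ?_)
  have hiO : i ∉ C.O j := fun hi => hj (C.classOf_eq_of_mem hi)
  exact (C.mem_MO_iff.1 (x j).2).2.2 i hiO

lemma Ctx.factor {g : Equiv.Perm (ZMod (r * s))} (hg : g ∈ C.M) :
    ∃! x : ∀ j : Fin C.nc, ↥(C.MO j),
      g = (List.ofFn fun j => ((x j : Equiv.Perm (ZMod (r * s))))).prod := by
  have hsel : ∀ j : Fin C.nc, ∃ y : ↥(C.MO j),
      piB r s (y : Equiv.Perm (ZMod (r * s))) (C.rep j) = piB r s g (C.rep j) := by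
    intro j
    obtain ⟨y, hy, hyp⟩ := C.MO_surj j _ ((C.mem_M_iff.1 hg).2 (C.rep j))
    exact ⟨⟨y, hy⟩, hyp⟩
  choose x hx using hsel
  have hPM := C.prod_x_mem_M x
  have heq : g = (List.ofFn fun j => ((x j : Equiv.Perm (ZMod (r * s))))).prod := by
    have hz : ∀ i, piB r s (g * ((List.ofFn fun j =>
        ((x j : Equiv.Perm (ZMod (r * s))))).prod)⁻¹) i = 1 := by
      have hzrep : ∀ j, piB r s (g * ((List.ofFn fun j =>
          ((x j : Equiv.Perm (ZMod (r * s))))).prod)⁻¹) (C.rep j) = 1 := by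
        intro j
        rw [C.piB_mul_inv (C.M_le_K hg) (C.M_le_K hPM), C.piB_prod_x x, C.classOf_rep j,
          hx j, mul_inv_cancel]
      intro i
      have hzM : g * ((List.ofFn fun j =>
          ((x j : Equiv.Perm (ZMod (r * s))))).prod)⁻¹ ∈ C.M := mul_mem hg (inv_mem hPM)
      have hreli : C.rel (C.rep (C.classOf i)) i := C.mem_O_iff.1 (C.mem_O_classOf i)
      exact (hreli _ hzM).1 (hzrep (C.classOf i))
    have := eq_one_of_piB (fun i => C.K_PB (C.M_le_K (mul_mem hg (inv_mem hPM))) i) hz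
    exact eq_of_mul_inv_eq_one this
  refine ⟨x, heq, fun y hy => ?_⟩
  funext j
  have h1 : piB r s (y j : Equiv.Perm (ZMod (r * s))) (C.rep j)
      = piB r s (x j : Equiv.Perm (ZMod (r * s))) (C.rep j) := by
    have e1 := C.piB_prod_x y (C.rep j)
    have e2 := C.piB_prod_x x (C.rep j)
    rw [← hy] at e1
    rw [← heq] at e2
    rw [C.classOf_rep j] at e1 e2
    rw [← e1, ← e2]
  apply Subtype.ext
  have hmem : (y j : Equiv.Perm (ZMod (r * s))) * (x j : Equiv.Perm (ZMod (r * s)))⁻¹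
      ∈ C.MO j := mul_mem (y j).2 (inv_mem (x j).2)
  have hone := C.MO_eq_one hmem (by
    rw [C.piB_mul_inv (C.mem_MO_iff.1 (y j).2).1 (C.mem_MO_iff.1 (x j).2).1, h1,
      mul_inv_cancel])
  exact eq_of_mul_inv_eq_one hone

end Stmt6
namespace Stmt6
variable {r s : ℕ} [NeZero r] [NeZero s] (C : Ctx r s)

lemma Ctx.Msub_normal : ((C.M).subgroupOf C.K).Normal := by
  constructor
  rintro ⟨x, hxK⟩ hx ⟨κ, hκK⟩
  rw [Subgroup.mem_subgroupOf] at hx ⊢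
  exact (C.M_conj_by_K hκK hx).1

lemma Ctx.MO_conj {κ x : Equiv.Perm (ZMod (r * s))} {j : Fin C.nc} (hκ : κ ∈ C.K)
    (hx : x ∈ C.MO j) : κ * x * κ⁻¹ ∈ C.MO j := by
  obtain ⟨hconjM, hconjpi⟩ := C.M_conj_by_K hκ (C.MO_le_M j hx)
  refine C.mem_MO_iff.2 ⟨C.M_le_K hconjM, (C.mem_M_iff.1 hconjM).2, fun i hi => ?_⟩
  rw [hconjpi i, (C.mem_MO_iff.1 hx).2.2 i hi, mul_one, mul_inv_cancel]

lemma Ctx.MOsub_normal (j : Fin C.nc) : ((C.MO j).subgroupOf C.K).Normal := by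
  constructor
  rintro ⟨x, hxK⟩ hx ⟨κ, hκK⟩
  rw [Subgroup.mem_subgroupOf] at hx ⊢
  exact C.MO_conj hκK hx

lemma Ctx.MOsub_ne_bot (j : Fin C.nc) : (C.MO j).subgroupOf C.K ≠ ⊥ := by
  obtain ⟨l, hl, hlne⟩ := C.L_nontrivial
  obtain ⟨g, hg, hgl⟩ := C.MO_surj j l hl
  have hgne : g ≠ 1 := by
    intro h
    rw [h, piB_one] at hgl
    exact hlne hgl.symm
  refine Subgroup.ne_bot_iff_exists_ne_one.2
    ⟨⟨⟨g, (C.mem_MO_iff.1 hg).1⟩, Subgroup.mem_subgroupOf.2 hg⟩, fun h => hgne ?_⟩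
  exact congrArg (fun z : ↥((C.MO j).subgroupOf C.K) => ((z : ↥C.K) : Equiv.Perm (ZMod (r * s)))) h

lemma Ctx.MOsub_min (j : Fin C.nc) : ∀ N' : Subgroup ↥C.K, N'.Normal →
    N' ≤ (C.MO j).subgroupOf C.K → N' = ⊥ ∨ N' = (C.MO j).subgroupOf C.K := by
  intro N' hN' hle
  by_cases hbot : N' = ⊥
  · exact Or.inl hbot
  right
  refine le_antisymm hle ?_
  obtain ⟨n₀, hn₀ne⟩ := Subgroup.ne_bot_iff_exists_ne_one.1 hbot
  -- components of N' at rep j form a nontrivial L-normalized subgroup of L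
  have hcoe_MO : ∀ n : ↥C.K, n ∈ N' → (n : Equiv.Perm (ZMod (r * s))) ∈ C.MO j :=
    fun n hn => Subgroup.mem_subgroupOf.1 (hle hn)
  set PiN : Subgroup (Equiv.Perm (ZMod s)) :=
    { carrier := {z | ∃ n : ↥C.K, n ∈ N' ∧
        piB r s (n : Equiv.Perm (ZMod (r * s))) (C.rep j) = z}
      one_mem' := ⟨1, one_mem _, piB_one _⟩
      mul_mem' := by
        rintro z w ⟨n, hn, rfl⟩ ⟨n', hn', rfl⟩
        exact ⟨n * n', mul_mem hn hn', piB_mul (C.K_PB n.2 _) (C.K_PB n'.2 _)⟩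
      inv_mem' := by
        rintro z ⟨n, hn, rfl⟩
        exact ⟨n⁻¹, inv_mem hn, piB_inv (C.K_PB n.2 _)⟩ } with hPiN
  have hPiNL : ∀ z ∈ PiN, z ∈ C.L := by
    rintro z ⟨n, hn, rfl⟩
    exact (C.mem_MO_iff.1 (hcoe_MO n hn)).2.1 (C.rep j)
  have hPiNnorm : ∀ h ∈ C.L, ∀ z ∈ PiN, h * z * h⁻¹ ∈ PiN := by
    rintro h hh z ⟨n, hn, rfl⟩
    obtain ⟨κ, hκK, hκ⟩ := C.L_le_PiK (C.rep j) h hh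
    refine ⟨⟨κ, hκK⟩ * n * ⟨κ, hκK⟩⁻¹, hN'.conj_mem n hn ⟨κ, hκK⟩, ?_⟩
    have := (C.M_conj_by_K hκK (C.MO_le_M j (hcoe_MO n hn))).2 (C.rep j)
    rw [hκ] at this
    exact this
  have hPiNne : ∃ z ∈ PiN, z ≠ (1 : Equiv.Perm (ZMod s)) := by
    refine ⟨piB r s (n₀ : ↥C.K) (C.rep j), ⟨(n₀ : ↥C.K), n₀.2, rfl⟩, fun h1 => ?_⟩
    have hMO := hcoe_MO _ n₀.2
    have := C.MO_eq_one hMO h1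
    apply hn₀ne
    apply Subtype.ext
    apply Subtype.ext
    exact this
  have hLPiN := C.L_le_of_normal PiN (fun z hz => C.hLU (hPiNL z hz)) hPiNnorm hPiNL hPiNne
  -- now MOsub ≤ N'
  intro x hx
  rw [Subgroup.mem_subgroupOf] at hx
  have hxL : piB r s (x : Equiv.Perm (ZMod (r * s))) (C.rep j) ∈ C.L :=
    (C.mem_MO_iff.1 hx).2.1 _
  obtain ⟨n, hn, hneq⟩ := hLPiN _ hxL
  have hmem : (x : Equiv.Perm (ZMod (r * s))) * (n : Equiv.Perm (ZMod (r * s)))⁻¹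
      ∈ C.MO j := mul_mem hx (inv_mem (hcoe_MO n hn))
  have hone := C.MO_eq_one hmem (by
    rw [C.piB_mul_inv x.2 n.2, hneq, mul_inv_cancel])
  have : x = n := Subtype.ext (eq_of_mul_inv_eq_one hone)
  rw [this]
  exact hn

lemma Ctx.minnormal_le_M (N : Subgroup ↥C.K) (hN : N.Normal) (hNbot : N ≠ ⊥)
    (hmin : ∀ N' : Subgroup ↥C.K, N'.Normal → N' ≤ N → N' = ⊥ ∨ N' = N) :
    ∀ n ∈ N, (n : Equiv.Perm (ZMod (r * s))) ∈ C.M := by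
  have hN'normal : (N ⊓ (C.M).subgroupOf C.K).Normal := by
    constructor
    intro x hx g
    exact Subgroup.mem_inf.2 ⟨hN.conj_mem x (Subgroup.mem_inf.1 hx).1 g,
      (C.Msub_normal).conj_mem x (Subgroup.mem_inf.1 hx).2 g⟩
  rcases hmin _ hN'normal inf_le_left with hbot | heq
  · exfalso
    apply hNbot
    rw [eq_bot_iff]
    intro n hn
    rw [Subgroup.mem_bot]
    -- n commutes with every element of M
    have hcomm : ∀ m ∈ C.M, (n : Equiv.Perm (ZMod (r * s))) * m
        = m * (n : Equiv.Perm (ZMod (r * s))) := by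
      intro m hm
      set msub : ↥C.K := ⟨m, C.M_le_K hm⟩ with hmsub
      have hcN : n * msub * n⁻¹ * msub⁻¹ ∈ N := by
        have h1 : msub * n⁻¹ * msub⁻¹ ∈ N := hN.conj_mem n⁻¹ (inv_mem hn) msub
        have h2 := mul_mem hn h1
        have h3 : n * (msub * n⁻¹ * msub⁻¹) = n * msub * n⁻¹ * msub⁻¹ := by group
        rwa [h3] at h2
      have hcM : n * msub * n⁻¹ * msub⁻¹ ∈ (C.M).subgroupOf C.K := by
        rw [Subgroup.mem_subgroupOf]
        have h1 : ((n * msub * n⁻¹ * msub⁻¹ : ↥C.K) : Equiv.Perm (ZMod (r * s)))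
            = (n : Equiv.Perm (ZMod (r * s))) * m * (n : Equiv.Perm (ZMod (r * s)))⁻¹
              * m⁻¹ := rfl
        rw [h1]
        exact mul_mem (C.M_conj_by_K n.2 hm).1 (inv_mem hm)
      have := Subgroup.mem_inf.2 ⟨hcN, hcM⟩
      rw [hbot, Subgroup.mem_bot] at this
      have hco : (n : Equiv.Perm (ZMod (r * s))) * m * (n : Equiv.Perm (ZMod (r * s)))⁻¹
          * m⁻¹ = 1 := by
        have h1 : ((n * msub * n⁻¹ * msub⁻¹ : ↥C.K) : Equiv.Perm (ZMod (r * s)))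
            = ((1 : ↥C.K) : Equiv.Perm (ZMod (r * s))) := congrArg _ this
        exact h1
      exact comm_eq_one hco
    -- hence all components are trivial
    apply Subtype.ext
    refine eq_one_of_piB (fun i => C.K_PB n.2 i) (fun i => ?_)
    apply C.hLcent _ (C.K_piB_mem n.2 i)
    intro l hl
    obtain ⟨m, hmM, hmil⟩ := C.PiM_eq_L i l hl
    have h1 := hcomm m hmM
    have h2 := congrArg (fun z => piB r s z i) h1
    rw [piB_mul (C.K_PB n.2 i) (C.K_PB (C.M_le_K hmM) i),
      piB_mul (C.K_PB (C.M_le_K hmM) i) (C.K_PB n.2 i), hmil] at h2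
    exact h2
  · intro n hn
    have : n ∈ N ⊓ (C.M).subgroupOf C.K := heq.symm ▸ hn
    exact Subgroup.mem_subgroupOf.1 (Subgroup.mem_inf.1 this).2

lemma Ctx.socle_eq : C.M = (socle ↥C.K).map C.K.subtype := by
  apply le_antisymm
  · intro m hm
    obtain ⟨x, hx, -⟩ := C.factor hm
    rw [hx]
    apply Subgroup.list_prod_mem
    intro g hgl
    obtain ⟨j, hj⟩ := List.mem_ofFn.1 hgl
    rw [← hj]
    refine Subgroup.mem_map.2 ⟨⟨(x j : Equiv.Perm (ZMod (r * s))),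
      (C.mem_MO_iff.1 (x j).2).1⟩, ?_, rfl⟩
    have hle : (C.MO j).subgroupOf C.K ≤ socle ↥C.K := by
      apply le_iSup₂ (f := fun (N : Subgroup ↥C.K) (_ : N ∈ _) => N)
      exact ⟨C.MOsub_normal j, C.MOsub_ne_bot j, C.MOsub_min j⟩
    exact hle (Subgroup.mem_subgroupOf.2 (x j).2)
  · rw [Subgroup.map_le_iff_le_comap]
    apply iSup₂_le
    intro N hP
    intro n hn
    rw [Subgroup.mem_comap]
    exact C.minnormal_le_M N hP.1 hP.2.1 hP.2.2 n hn

end Stmt6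
/-- Let `U ≤ S_s` and `V ≤ S_r` be transitive, and let `G ≤ U ≀ V ≤ S_{rs}` project onto `V`,
with the stabilizer of the block of the first point inducing all of `U` on that block. Assume
`U` is almost simple with nonabelian simple socle `L`, and that `K = G ∩ U^r` is nontrivial.
Then there is a partition `O_1, …, O_k` of the blocks, preserved by the blocks action of `G`,
with `K ∩ L^{O_j} ≅ L`, and `K ∩ L^r` is the internal direct product
`(K ∩ L^{O_1}) × ⋯ × (K ∩ L^{O_k})`, which is moreover the socle of `K`. -/
theorem stmt_6 (r s : ℕ) [NeZero r] [NeZero s]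
    (U : Subgroup (Equiv.Perm (ZMod s))) (V : Subgroup (Equiv.Perm (Fin r)))
    (hU : ∀ x y : ZMod s, ∃ u ∈ U, u x = y)
    (hV : ∀ x y : Fin r, ∃ v ∈ V, v x = y)
    (G : Subgroup (Equiv.Perm (ZMod (r * s))))
    (hGwr : ∀ g ∈ G, ∃ v ∈ V, ∃ u : Fin r → Equiv.Perm (ZMod s), (∀ i, u i ∈ U) ∧
      ∀ i k, g (blockEmb r s i k) = blockEmb r s (v i) (u i k))
    (hproj : ∀ v ∈ V, ∃ g ∈ G, ∃ u : Fin r → Equiv.Perm (ZMod s),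
      ∀ i k, g (blockEmb r s i k) = blockEmb r s (v i) (u i k))
    (hstab : ∀ h ∈ U, ∃ g ∈ G, ∀ k, g (blockEmb r s 0 k) = blockEmb r s 0 (h k))
    (L : Subgroup (Equiv.Perm (ZMod s))) (hLU : L ≤ U)
    (hLnormal : ∀ u ∈ U, ∀ x ∈ L, u * x * u⁻¹ ∈ L)
    (hLsimple : IsSimpleGroup ↥L)
    (hLnonab : ∃ a ∈ L, ∃ b ∈ L, a * b ≠ b * a)
    (hLcent : ∀ u ∈ U, (∀ x ∈ L, u * x = x * u) → u = 1)
    (hKne : blockKernel r s U G ≠ ⊥) :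
    ∃ (k : ℕ) (O : Fin k → Finset (Fin r)),
      (∀ j, (O j).Nonempty) ∧
      (∀ i : Fin r, ∃! j, i ∈ O j) ∧
      (∀ g ∈ G, ∀ (v : Equiv.Perm (Fin r)) (u : Fin r → Equiv.Perm (ZMod s)),
        (∀ i k', g (blockEmb r s i k') = blockEmb r s (v i) (u i k')) →
        ∀ j, ∃ j', (O j).image v = O j') ∧
      (∀ j, Nonempty (↥(blockKernel r s U G ⊓ diagSupport r s L (O j)) ≃* ↥L)) ∧
      (blockKernel r s U G ⊓ diagSupport r s L Finset.univ =
        (socle ↥(blockKernel r s U G)).map (blockKernel r s U G).subtype) ∧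
      (∀ g : Equiv.Perm (ZMod (r * s)),
        g ∈ blockKernel r s U G ⊓ diagSupport r s L Finset.univ ↔
        ∃! x : ∀ j : Fin k, ↥(blockKernel r s U G ⊓ diagSupport r s L (O j)),
          g = (List.ofFn fun j => ((x j : Equiv.Perm (ZMod (r * s))))).prod) := by
  classical
  set C : Stmt6.Ctx r s :=
    ⟨U, V, hU, hV, G, hGwr, hproj, hstab, L, hLU, hLnormal, hLsimple, hLnonab, hLcent, hKne⟩
    with hC
  refine ⟨C.nc, C.O, fun j => ⟨C.rep j, C.rep_mem j⟩,
    fun i => ⟨C.classOf i, C.mem_O_classOf i, fun j hj => C.classOf_eq_of_mem hj⟩,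
    ?_, fun j => ⟨C.MOiso j⟩, C.socle_eq, ?_⟩
  · intro g hg v u heq j
    obtain ⟨v1, hv1V, u1, hu1U, heq1⟩ := C.hGwr g hg
    have hvv1 : ∀ i, v i = v1 i := fun i => (Stmt6.vdet heq heq1 i).1
    have himg : (C.O j).image v = (C.O j).image v1 :=
      Finset.image_congr (fun i _ => hvv1 i)
    obtain ⟨j', hj'⟩ := C.image_O hg hu1U heq1 j
    exact ⟨j', himg.trans hj'⟩
  · intro g
    constructor
    · intro hg
      exact C.factor hg
    · rintro ⟨x, hx, -⟩
      rw [hx]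
      exact C.prod_x_mem_M x
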